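/- arXiv:1803.00239 — 9 statements merged into one kernel-verified Lean document; each statement's English description precedes it below -/
import Mathlib

section
/- Let (C,R,𝔳) and (C,R̂,𝔳̂) be Hamming ring extensions of rank m over a commutative ring C, with representation maps M_R and M_{R̂}, and let Θ : R → R̂ be a ring anti-isomorphism satisfying M_{R̂}(Θ(f)) = (M_R(f))ᵀ for all f ∈ R. Let f, h ∈ R and set 𝒞 = 𝔳(Rf). Then the right annihilator of Rf in R equals hR if and only if the dual code 𝒞^⊥ equals 𝔳̂(R̂·Θ(h)). -/
open Matrix

/-- For transposed Hamming ring extensions `(C,R,𝔳)` and `(C,R̂,𝔳̂)` with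
anti-isomorphism `Θ` satisfying `M_{R̂}(Θ f) = (M_R f)ᵀ`, and `𝒞 = 𝔳(Rf)`:
the right annihilator of `Rf` equals `hR` iff `𝒞^⊥ = 𝔳̂(R̂·Θ(h))`. -/
theorem stmt1 {C R Rh : Type*} [CommRing C] [Ring R] [Ring Rh] (m : ℕ)
    (ι : C →+* R) (hι : Function.Injective ι)
    (ιh : C →+* Rh) (hιh : Function.Injective ιh)
    [Module C R] [Module C Rh]
    (hsmul : ∀ (c : C) (r : R), c • r = ι c * r)
    (hsmulh : ∀ (c : C) (r : Rh), c • r = ιh c * r)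
    (v : R ≃ₗ[C] (Fin m → C)) (vh : Rh ≃ₗ[C] (Fin m → C))
    (MR : R → Matrix (Fin m) (Fin m) C) (Mh : Rh → Matrix (Fin m) (Fin m) C)
    (hMR : ∀ f g : R, v (g * f) = Matrix.vecMul (v g) (MR f))
    (hMh : ∀ f g : Rh, vh (g * f) = Matrix.vecMul (vh g) (Mh f))
    (Θ : R → Rh) (hΘbij : Function.Bijective Θ)
    (hΘadd : ∀ a b : R, Θ (a + b) = Θ a + Θ b)
    (hΘmul : ∀ a b : R, Θ (a * b) = Θ b * Θ a)
    (hΘone : Θ 1 = 1)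
    (htr : ∀ f : R, Mh (Θ f) = (MR f)ᵀ)
    (f h : R) :
    ({s : R | ∀ x : R, (x * f) * s = 0} = {s : R | ∃ r : R, s = h * r}) ↔
      ({w : Fin m → C | ∀ g : R, dotProduct w (v (g * f)) = 0}
        = Set.range fun g : Rh => vh (g * Θ h)) := by
  have hΘinj := hΘbij.1
  have hΘsurj := hΘbij.2
  have hΘzero : Θ 0 = 0 := by
    have h0 := hΘadd 0 0
    rw [add_zero] at h0
    exact (add_eq_left.mp h0.symm)
  have hA : ∀ s : R, (∀ x : R, (x * f) * s = 0) ↔ f * s = 0 := by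
    intro s
    constructor
    · intro H; have := H 1; simpa using this
    · intro H x; rw [mul_assoc, H, mul_zero]
  have hB : ∀ w : Fin m → C,
      (∀ g : R, dotProduct w (v (g * f)) = 0) ↔ vh.symm w * Θ f = 0 := by
    intro w
    have step1 : ∀ g : R, dotProduct w (v (g * f))
        = dotProduct (v g) (Matrix.mulVec (MR f) w) := by
      intro g
      rw [hMR, dotProduct_comm, ← dotProduct_mulVec]
    have step2 : (∀ g : R, dotProduct w (v (g * f)) = 0)
        ↔ Matrix.mulVec (MR f) w = 0 := by
      constructor
      · intro H
        funext i
        have hi := H (v.symm (Pi.single i 1))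
        rw [step1, LinearEquiv.apply_symm_apply] at hi
        simpa using hi
      · intro H g
        rw [step1, H, dotProduct_zero]
    have step3 : Matrix.mulVec (MR f) w = Matrix.vecMul w (Mh (Θ f)) := by
      rw [htr, Matrix.vecMul_transpose]
    have step4 : vh (vh.symm w * Θ f) = Matrix.vecMul w (Mh (Θ f)) := by
      rw [hMh, LinearEquiv.apply_symm_apply]
    rw [step2, step3, ← step4, LinearEquiv.map_eq_zero_iff]
  have hC : ∀ w : Fin m → C,
      (w ∈ Set.range fun g : Rh => vh (g * Θ h)) ↔ ∃ r : R, vh.symm w = Θ (h * r) := by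
    intro w
    constructor
    · rintro ⟨g, rfl⟩
      obtain ⟨r, rfl⟩ := hΘsurj g
      exact ⟨r, by rw [LinearEquiv.symm_apply_apply, hΘmul]⟩
    · rintro ⟨r, hr⟩
      refine ⟨Θ r, ?_⟩
      show vh (Θ r * Θ h) = w
      rw [← hΘmul, ← hr, LinearEquiv.apply_symm_apply]
  rw [Set.ext_iff, Set.ext_iff]
  constructor
  · intro H w
    rw [Set.mem_setOf_eq, hB, hC]
    obtain ⟨s, hs⟩ := hΘsurj (vh.symm w)
    rw [← hs]
    constructor
    · intro h0
      rw [← hΘmul] at h0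
      have hfs : f * s = 0 := hΘinj (h0.trans hΘzero.symm)
      obtain ⟨r, rfl⟩ := (H s).mp ((hA s).mpr hfs)
      exact ⟨r, rfl⟩
    · rintro ⟨r, hr⟩
      have hsr : s = h * r := hΘinj hr
      have hfs : f * s = 0 := (hA s).mp ((H s).mpr ⟨r, hsr⟩)
      rw [← hΘmul, hfs, hΘzero]
  · intro H s
    rw [Set.mem_setOf_eq, Set.mem_setOf_eq, hA]
    have Hw := H (vh (Θ s))
    rw [Set.mem_setOf_eq, hB, hC, LinearEquiv.symm_apply_apply] at Hw
    constructor
    · intro hfs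
      obtain ⟨r, hr⟩ := Hw.mp (by rw [← hΘmul, hfs, hΘzero])
      exact ⟨r, hΘinj hr⟩
    · rintro ⟨r, rfl⟩
      have h0 := Hw.mpr ⟨r, rfl⟩
      rw [← hΘmul] at h0
      exact hΘinj (h0.trans hΘzero.symm)
end

section
/- With the notation of the transpose Hamming extension setup, if 𝒞 = 𝔳(Rf) satisfies 𝒞^{⊥⊥} = 𝒞 and the right annihilator of Rf in R equals hR, then the left annihilator of hR in R equals Rf. -/
open Matrix

/-- The dual of a `C`-linear code `S ⊆ C^m`. -/
def dualCode {C : Type*} [CommRing C] {m : ℕ} (S : Set (Fin m → C)) : Set (Fin m → C) :=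
  {w | ∀ u ∈ S, dotProduct w u = 0}

/-- In the transpose Hamming extension setup, if `𝒞 = 𝔳(Rf)` satisfies
`𝒞^{⊥⊥} = 𝒞` and the right annihilator of `Rf` equals `hR`, then the left annihilator
of `hR` equals `Rf`. -/
theorem stmt2 {C R Rh : Type*} [CommRing C] [Ring R] [Ring Rh] (m : ℕ)
    (ι : C →+* R) (hι : Function.Injective ι)
    (ιh : C →+* Rh) (hιh : Function.Injective ιh)
    [Module C R] [Module C Rh]
    (hsmul : ∀ (c : C) (r : R), c • r = ι c * r)
    (hsmulh : ∀ (c : C) (r : Rh), c • r = ιh c * r)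
    (v : R ≃ₗ[C] (Fin m → C)) (vh : Rh ≃ₗ[C] (Fin m → C))
    (MR : R → Matrix (Fin m) (Fin m) C) (Mh : Rh → Matrix (Fin m) (Fin m) C)
    (hMR : ∀ f g : R, v (g * f) = Matrix.vecMul (v g) (MR f))
    (hMh : ∀ f g : Rh, vh (g * f) = Matrix.vecMul (vh g) (Mh f))
    (Θ : R → Rh) (hΘbij : Function.Bijective Θ)
    (hΘadd : ∀ a b : R, Θ (a + b) = Θ a + Θ b)
    (hΘmul : ∀ a b : R, Θ (a * b) = Θ b * Θ a)
    (hΘone : Θ 1 = 1)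
    (htr : ∀ f : R, Mh (Θ f) = (MR f)ᵀ)
    (f h : R)
    (hbidual : dualCode (dualCode (Set.range fun g : R => v (g * f)))
      = Set.range fun g : R => v (g * f))
    (hann : {s : R | ∀ x : R, (x * f) * s = 0} = {s : R | ∃ r : R, s = h * r}) :
    {s : R | ∀ x : R, s * (h * x) = 0} = {s : R | ∃ g : R, s = g * f} := by
  classical
  -- basic facts
  have hΘzero : Θ 0 = 0 := by
    have h0 := hΘadd 0 0
    rw [add_zero] at h0
    exact left_eq_add.mp h0
  have hΘinj : Function.Injective Θ := hΘbij.1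
  -- nondegeneracy of dot product
  have hzero : ∀ w : Fin m → C, (∀ u : Fin m → C, dotProduct w u = 0) → w = 0 := by
    intro w hw
    funext i
    have := hw (Pi.single i 1)
    simpa using this
  -- transpose pairing identity
  have hpair : ∀ (u w : Fin m → C) (A : Matrix (Fin m) (Fin m) C),
      dotProduct (Matrix.vecMul u A) w = dotProduct u (Matrix.vecMul w Aᵀ) := by
    intro u w A
    rw [Matrix.vecMul_transpose, dotProduct_mulVec]
  have key : ∀ (a b : R) (t : Rh),
      dotProduct (v (a * b)) (vh t) = dotProduct (v a) (vh (t * Θ b)) := by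
    intro a b t
    rw [hMR, hMh, htr, hpair]
  -- f * h = 0
  have hfh : f * h = 0 := by
    have hh : h ∈ {s : R | ∃ r : R, s = h * r} := ⟨1, (mul_one h).symm⟩
    rw [← hann] at hh
    have := hh 1
    simpa using this
  -- characterize the dual code
  have hD : dualCode (Set.range fun g : R => v (g * f))
      = Set.range (fun q : Rh => vh (q * Θ h)) := by
    ext w
    constructor
    · intro hw
      set t := vh.symm w with ht
      have hwt : w = vh t := by simp [ht]
      have h1 : ∀ g : R, dotProduct (v g) (vh (t * Θ f)) = 0 := by
        intro g
        rw [← key]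
        rw [dotProduct_comm, ← hwt]
        exact hw _ ⟨g, rfl⟩
      have h2 : vh (t * Θ f) = 0 := by
        apply hzero
        intro u
        rw [dotProduct_comm]
        have := h1 (v.symm u)
        simpa using this
      have h3 : t * Θ f = 0 := by
        have := vh.injective (by simpa using h2 : vh (t * Θ f) = vh 0)
        exact this
      obtain ⟨s, hts⟩ := hΘbij.2 t
      have h4 : Θ (f * s) = 0 := by rw [hΘmul, hts, h3]
      have h5 : f * s = 0 := hΘinj (by rw [h4, hΘzero])
      have h6 : s ∈ {s : R | ∀ x : R, (x * f) * s = 0} := by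
        intro x
        rw [mul_assoc, h5, mul_zero]
      rw [hann] at h6
      obtain ⟨r, hr⟩ := h6
      refine ⟨Θ r, ?_⟩
      rw [hwt, ← hts, hr, hΘmul]
    · rintro ⟨q, rfl⟩
      rintro u ⟨g, rfl⟩
      rw [dotProduct_comm, key]
      have : q * Θ h * Θ f = 0 := by
        rw [mul_assoc, ← hΘmul, hfh, hΘzero, mul_zero]
      rw [this]
      simp
  have hC : (Set.range fun g : R => v (g * f))
      = dualCode (Set.range (fun q : Rh => vh (q * Θ h))) := by
    rw [← hD, hbidual]
  -- conclude
  ext s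
  simp only [Set.mem_setOf_eq]
  constructor
  · intro hsl
    have hsh : s * h = 0 := by
      have := hsl 1
      simpa using this
    have hmem : v s ∈ dualCode (Set.range (fun q : Rh => vh (q * Θ h))) := by
      rintro u ⟨q, rfl⟩
      rw [← key s h q, hsh, map_zero, zero_dotProduct]
    rw [← hC] at hmem
    obtain ⟨g, hg⟩ := hmem
    exact ⟨g, v.injective hg.symm⟩
  · rintro ⟨g, rfl⟩
    intro x
    have hmem : v (g * f) ∈ dualCode (Set.range (fun q : Rh => vh (q * Θ h))) := by
      rw [← hC]; exact ⟨g, rfl⟩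
    have h1 : ∀ q : Rh, dotProduct (vh q) (v (g * f * h)) = 0 := by
      intro q
      rw [dotProduct_comm, key (g * f) h q]
      exact hmem _ ⟨q, rfl⟩
    have h2 : v (g * f * h) = 0 := by
      apply hzero
      intro u
      rw [dotProduct_comm]
      have := h1 (vh.symm u)
      simpa using this
    have h3 : g * f * h = 0 := v.injective (by simpa using h2)
    rw [← mul_assoc, h3, zero_mul]
end

section
/- Let A be a finite-dimensional F-algebra with F-automorphism σ and an involution θ : A → A (an anti-algebra homomorphism with θ² = id). Set σ̂ = θ∘σ^{-1}∘θ. Then the map Θ : A[z;σ] → A[z;σ̂] given by Θ(Σ_k z^k a_k) = Σ_k z^k θ(σ^{-k}(a_k)) is an anti-isomorphism of F-algebras. -/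
/-- Given a finite-dimensional `F`-algebra `A` with automorphism `σ` and an
involution `θ` (F-linear anti-homomorphism with `θ² = id`), and setting `σ̂ = θ∘σ⁻¹∘θ`,
the map `Θ : A[z;σ] → A[z;σ̂]`, `Θ(Σ z^k a_k) = Σ z^k θ(σ^{-k}(a_k))`, is an
anti-isomorphism of `F`-algebras. The skew right polynomial rings are presented
abstractly: `R` (resp. `Rh`) is free as a right `A`-module on the powers of `z`
(resp. `z'`), with `a·z = z·σ(a)` (resp. `a·z' = z'·σ̂(a)`). -/
theorem stmt4 {F A R Rh : Type*} [Field F] [Ring A] [Algebra F A] [FiniteDimensional F A]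
    [Ring R] [Ring Rh]
    (σ : A ≃ₐ[F] A) (θ : A → A)
    (hθlin : ∀ (c : F) (a : A), θ (c • a) = c • θ a)
    (hθadd : ∀ a c : A, θ (a + c) = θ a + θ c)
    (hθmul : ∀ a c : A, θ (a * c) = θ c * θ a)
    (hθone : θ 1 = 1) (hθinv : ∀ a, θ (θ a) = a)
    (ι : A →+* R) (z : R) (hz : ∀ a, ι a * z = z * ι (σ a))
    (rep : (ℕ →₀ A) ≃+ R)
    (hrep : ∀ p, rep p = ∑ k ∈ p.support, z ^ k * ι (p k))
    (ι' : A →+* Rh) (z' : Rh)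
    (hz' : ∀ a, ι' a * z' = z' * ι' (θ (σ.symm (θ a))))
    (rep' : (ℕ →₀ A) ≃+ Rh)
    (hrep' : ∀ p, rep' p = ∑ k ∈ p.support, z' ^ k * ι' (p k)) :
    ∃ Θ : R → Rh,
      (∀ r : R, Θ r = ∑ k ∈ (rep.symm r).support,
          z' ^ k * ι' (θ ((⇑σ.symm)^[k] ((rep.symm r) k)))) ∧
      Function.Bijective Θ ∧
      (∀ a b : R, Θ (a + b) = Θ a + Θ b) ∧
      (∀ a b : R, Θ (a * b) = Θ b * Θ a) ∧
      Θ 1 = 1 ∧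
      (∀ c : F, Θ (ι (algebraMap F A c)) = ι' (algebraMap F A c)) := by
  -- basic facts about θ
  have hθ0 : θ 0 = 0 := by
    have h := hθadd 0 0
    rw [add_zero] at h
    exact (add_eq_left.mp h.symm)
  have hθinj : Function.Injective θ := Function.LeftInverse.injective hθinv
  -- σ̂
  set s : A → A := fun a => θ (σ.symm (θ a)) with hs_def
  -- f k
  set f : ℕ → A → A := fun k x => θ ((⇑σ.symm)^[k] x) with hf_def
  have hf0 : ∀ k, f k 0 = 0 := by
    intro k
    simp only [hf_def]
    rw [Function.iterate_fixed (by simp) k, hθ0]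
  have hfinj : ∀ k, Function.Injective (f k) := by
    intro k x y h
    have h2 := hθinj h
    have : Function.Injective ((⇑σ.symm)^[k]) :=
      Function.Injective.iterate σ.symm.injective k
    exact this h2
  -- iterate lemmas
  have hit_add : ∀ (k : ℕ) (x y : A),
      (⇑σ.symm)^[k] (x + y) = (⇑σ.symm)^[k] x + (⇑σ.symm)^[k] y := by
    intro k
    induction k with
    | zero => intro x y; simp
    | succ n ih =>
      intro x y
      simp only [Function.iterate_succ_apply', ih, map_add]
  have hit_mul : ∀ (k : ℕ) (x y : A),
      (⇑σ.symm)^[k] (x * y) = (⇑σ.symm)^[k] x * (⇑σ.symm)^[k] y := by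
    intro k
    induction k with
    | zero => intro x y; simp
    | succ n ih =>
      intro x y
      simp only [Function.iterate_succ_apply', ih, map_mul]
  have hit_inv : ∀ (j : ℕ) (a : A), (⇑σ.symm)^[j] ((⇑σ)^[j] a) = a := by
    intro j
    induction j with
    | zero => intro a; rfl
    | succ n ih =>
      intro a
      rw [Function.iterate_succ_apply' (⇑σ), Function.iterate_succ_apply (⇑σ.symm)]
      rw [σ.symm_apply_apply]
      exact ih a
  have hs_theta : ∀ (i : ℕ) (x : A), s^[i] (θ x) = θ ((⇑σ.symm)^[i] x) := by
    intro i
    induction i with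
    | zero => intro x; rfl
    | succ n ih =>
      intro x
      rw [Function.iterate_succ_apply' s, ih, Function.iterate_succ_apply' (⇑σ.symm)]
      simp only [hs_def, hθinv]
  -- monomials
  have hmono : ∀ (k : ℕ) (a : A), rep (Finsupp.single k a) = z ^ k * ι a := by
    intro k a
    by_cases ha : a = 0
    · subst ha
      simp [map_zero]
    · rw [hrep, Finsupp.support_single_ne_zero _ ha, Finset.sum_singleton,
        Finsupp.single_eq_same]
  have hmono' : ∀ (k : ℕ) (a : A), rep' (Finsupp.single k a) = z' ^ k * ι' a := by
    intro k a
    by_cases ha : a = 0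
    · subst ha
      simp [map_zero]
    · rw [hrep', Finsupp.support_single_ne_zero _ ha, Finset.sum_singleton,
        Finsupp.single_eq_same]
  -- commutation with powers
  have hzpow : ∀ (k : ℕ) (a : A), ι a * z ^ k = z ^ k * ι ((⇑σ)^[k] a) := by
    intro k
    induction k with
    | zero => intro a; simp
    | succ n ih =>
      intro a
      rw [pow_succ, ← mul_assoc, ih, mul_assoc, hz, Function.iterate_succ_apply',
        ← mul_assoc]
  have hzpow' : ∀ (k : ℕ) (a : A), ι' a * z' ^ k = z' ^ k * ι' (s^[k] a) := by
    intro k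
    induction k with
    | zero => intro a; simp
    | succ n ih =>
      intro a
      rw [pow_succ, ← mul_assoc, ih, mul_assoc, hz' (s^[n] a),
        Function.iterate_succ_apply' s, ← mul_assoc]
  -- product of monomials
  have hmulmono : ∀ (i j : ℕ) (a b : A),
      (z ^ i * ι a) * (z ^ j * ι b) = z ^ (i + j) * ι ((⇑σ)^[j] a * b) := by
    intro i j a b
    rw [mul_assoc, ← mul_assoc (ι a), hzpow, mul_assoc, ← map_mul, ← mul_assoc,
      ← pow_add]
  have hmulmono' : ∀ (i j : ℕ) (a b : A),
      (z' ^ i * ι' a) * (z' ^ j * ι' b) = z' ^ (i + j) * ι' (s^[j] a * b) := by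
    intro i j a b
    rw [mul_assoc, ← mul_assoc (ι' a), hzpow', mul_assoc, ← map_mul, ← mul_assoc,
      ← pow_add]
  -- the coefficient map T
  set T : (ℕ →₀ A) → (ℕ →₀ A) := fun p =>
    Finsupp.onFinset p.support (fun k => f k (p k)) (by
      intro k hk
      rw [Finsupp.mem_support_iff]
      intro h0
      apply hk
      show f k (p k) = 0
      rw [h0]
      exact hf0 k) with hT_def
  have hT_apply : ∀ (p : ℕ →₀ A) (k : ℕ), T p k = f k (p k) := by
    intro p k; rfl
  have hT_supp : ∀ p : ℕ →₀ A, (T p).support = p.support := by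
    intro p
    ext k
    simp only [Finsupp.mem_support_iff, hT_apply]
    constructor
    · intro h h0; exact h (by rw [h0]; exact hf0 k)
    · intro h h0; exact h (hfinj k (by rw [h0, hf0]))
  have hT_add : ∀ p q : ℕ →₀ A, T (p + q) = T p + T q := by
    intro p q
    ext k
    simp only [hT_apply, Finsupp.add_apply, hf_def, hit_add, hθadd]
  have hT_single : ∀ (k : ℕ) (a : A), T (Finsupp.single k a) = Finsupp.single k (f k a) := by
    intro k a
    ext i
    by_cases hik : i = k
    · subst hik
      rw [hT_apply, Finsupp.single_eq_same, Finsupp.single_eq_same]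
    · rw [hT_apply, Finsupp.single_eq_of_ne' (Ne.symm hik),
        Finsupp.single_eq_of_ne' (Ne.symm hik), hf0]
  have hT_bij : Function.Bijective T := by
    constructor
    · intro p q h
      ext k
      have hk : T p k = T q k := by rw [h]
      rw [hT_apply, hT_apply] at hk
      exact hfinj k hk
    · intro q
      refine ⟨Finsupp.onFinset q.support (fun k => (⇑σ)^[k] (θ (q k))) ?_, ?_⟩
      · intro k hk
        rw [Finsupp.mem_support_iff]
        intro h0
        apply hk
        simp only [h0, hθ0]
        exact Function.iterate_fixed (by simp) k
      · ext k
        rw [hT_apply]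
        show f k ((⇑σ)^[k] (θ (q k))) = q k
        simp only [hf_def]
        rw [hit_inv, hθinv]
  -- definition of Θ
  refine ⟨fun r => rep' (T (rep.symm r)), ?_, ?_, ?_, ?_, ?_, ?_⟩
  · -- formula
    intro r
    show rep' (T (rep.symm r)) = _
    rw [hrep']
    rw [hT_supp]
    exact Finset.sum_congr rfl (fun k _ => by rw [hT_apply])
  · -- bijective
    exact rep'.bijective.comp (hT_bij.comp rep.symm.bijective)
  · -- additive
    intro a b
    show rep' (T (rep.symm (a + b))) = rep' (T (rep.symm a)) + rep' (T (rep.symm b))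
    rw [map_add, hT_add, map_add]
  · -- anti-multiplicative
    have hΘ0 : rep' (T (rep.symm (0 : R))) = 0 := by
      rw [map_zero]
      have hT0 : T (0 : ℕ →₀ A) = 0 := by
        ext k; simp [hT_apply, hf0]
      rw [hT0, map_zero]
    have key : ∀ p q : ℕ →₀ A,
        rep' (T (rep.symm (rep p * rep q)))
          = rep' (T (rep.symm (rep q))) * rep' (T (rep.symm (rep p))) := by
      have hmonocase : ∀ (i j : ℕ) (a b : A),
          rep' (T (rep.symm (rep (Finsupp.single i a) * rep (Finsupp.single j b))))
            = rep' (T (rep.symm (rep (Finsupp.single j b))))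
              * rep' (T (rep.symm (rep (Finsupp.single i a)))) := by
        intro i j a b
        have hL : rep (Finsupp.single i a) * rep (Finsupp.single j b)
            = rep (Finsupp.single (i + j) ((⇑σ)^[j] a * b)) := by
          rw [hmono, hmono, hmulmono, ← hmono]
        rw [hL, rep.symm_apply_apply, rep.symm_apply_apply, rep.symm_apply_apply,
          hT_single, hT_single, hT_single, hmono', hmono', hmono', hmulmono']
        congr 1
        · rw [add_comm j i]
        · congr 1
          simp only [hf_def]
          rw [hs_theta, hit_mul, hθmul, Function.iterate_add_apply,
            Function.iterate_add_apply, hit_inv]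
      intro p q
      induction p using Finsupp.induction_linear with
      | zero =>
        rw [map_zero, zero_mul, hΘ0, mul_zero]
      | add p1 p2 ih1 ih2 =>
        simp only [map_add, add_mul, mul_add, hT_add, ih1, ih2]
      | single i a =>
        induction q using Finsupp.induction_linear with
        | zero =>
          rw [map_zero, mul_zero, hΘ0, zero_mul]
        | add q1 q2 ih1 ih2 =>
          simp only [map_add, mul_add, add_mul, hT_add, ih1, ih2]
        | single j b => exact hmonocase i j a b
    intro a b
    obtain ⟨p, hp⟩ := rep.surjective a
    obtain ⟨q, hq⟩ := rep.surjective b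
    subst hp hq
    exact key p q
  · -- Θ 1 = 1
    have h1 : (1 : R) = rep (Finsupp.single 0 1) := by
      rw [hmono]; simp
    show rep' (T (rep.symm 1)) = 1
    rw [h1, rep.symm_apply_apply, hT_single, hmono']
    simp only [hf_def, Function.iterate_zero, id_eq, pow_zero, one_mul]
    rw [hθone, map_one]
  · -- structure map
    intro c
    have h1 : ι (algebraMap F A c) = rep (Finsupp.single 0 (algebraMap F A c)) := by
      rw [hmono]; simp
    show rep' (T (rep.symm (ι (algebraMap F A c)))) = ι' (algebraMap F A c)
    rw [h1, rep.symm_apply_apply, hT_single, hmono']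
    simp only [hf_def, Function.iterate_zero, id_eq, pow_zero, one_mul]
    congr 1
    rw [Algebra.algebraMap_eq_smul_one, hθlin, hθone]
end

section
/- In the setting of the previous statement, if additionally the coordinate map 𝔳 satisfies M_{σ̂} = (M_σ)ᵀ and M_{θ(a)} = (M_a)ᵀ for all a ∈ A, then M_{R̂}(Θ(f)) = (M_R(f))ᵀ for all f ∈ R = A[z;σ], where R̂ = A[z;σ̂]; that is, Θ is a transposition between the Hamming extensions (F[z], R, 𝔳) and (F[z], R̂, 𝔳). -/
open Matrix Polynomial

section helpers

variable {F A : Type*} [Field F] [Ring A] [Algebra F A] {m : ℕ}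

private noncomputable def Mat (b : Module.Basis (Fin m) F A) (l : A →ₗ[F] A) :
    Matrix (Fin m) (Fin m) F := Matrix.of fun i j => b.repr (l (b i)) j

private lemma repr_map (b : Module.Basis (Fin m) F A) (l : A →ₗ[F] A) (x : A) (j : Fin m) :
    b.repr (l x) j = ∑ i, b.repr x i * b.repr (l (b i)) j := by
  conv_lhs => rw [← b.sum_repr x]
  simp only [map_sum, _root_.map_smul, Finsupp.finset_sum_apply, Finsupp.smul_apply, smul_eq_mul]

private lemma Mat_comp (b : Module.Basis (Fin m) F A) (l l' : A →ₗ[F] A) :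
    Mat b (l ∘ₗ l') = Mat b l' * Mat b l := by
  ext i j
  simp [Mat, Matrix.mul_apply, repr_map b l (l' (b i)) j]

private lemma Mat_one (b : Module.Basis (Fin m) F A) : Mat b (1 : A →ₗ[F] A) = 1 := by
  ext i j
  simp [Mat, Matrix.one_apply, Module.Basis.repr_self, Finsupp.single_apply]

private lemma Mat_pow (b : Module.Basis (Fin m) F A) (l : A →ₗ[F] A) (k : ℕ) :
    Mat b (l ^ k) = (Mat b l) ^ k := by
  induction k with
  | zero => simpa using Mat_one b
  | succ n ih =>
      rw [pow_succ, Module.End.mul_eq_comp, Mat_comp, ih, pow_succ']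

end helpers

section key
variable {F A : Type*} [Field F] [Ring A] [Algebra F A] {m : ℕ}

private lemma key (b : Module.Basis (Fin m) F A) (σ : A ≃ₐ[F] A) (θ : A → A)
    (hθlin : ∀ (c : F) (a : A), θ (c • a) = c • θ a)
    (hθadd : ∀ a c : A, θ (a + c) = θ a + θ c)
    (hMσ : (Matrix.of fun i j => b.repr (θ (σ.symm (θ (b i)))) j)
        = (Matrix.of fun i j => b.repr (σ (b i)) j)ᵀ)
    (hMθ : ∀ a : A, (Matrix.of fun i j => b.repr (b i * θ a) j)
        = (Matrix.of fun i j => b.repr (b i * a) j)ᵀ)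
    (k : ℕ) (q : A) (i j : Fin m) :
    b.repr ((fun x => θ (σ.symm (θ x)))^[k] (b i) * θ ((⇑σ.symm)^[k] q)) j
      = b.repr ((⇑σ)^[k] (b j) * q) i := by
  let θL : A →ₗ[F] A :=
    { toFun := θ, map_add' := hθadd, map_smul' := hθlin }
  let hσ : A →ₗ[F] A := θL ∘ₗ (σ.symm.toLinearMap ∘ₗ θL)
  let σL : A →ₗ[F] A := σ.toLinearMap
  let rmul : A → (A →ₗ[F] A) := fun a =>
    { toFun := fun x => x * a, map_add' := fun x y => add_mul x y a,
      map_smul' := fun c x => smul_mul_assoc c x a }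
  have h1 : Mat b hσ = (Mat b σL)ᵀ := hMσ
  have h2 : ∀ a : A, Mat b (rmul (θ a)) = (Mat b (rmul a))ᵀ := fun a => hMθ a
  have hiter_mul : ∀ (n : ℕ) (x y : A), (⇑σ)^[n] (x * y) = (⇑σ)^[n] x * (⇑σ)^[n] y := by
    intro n
    induction n with
    | zero => intro x y; simp
    | succ n ih =>
        intro x y
        simp only [Function.iterate_succ_apply', ih, _root_.map_mul]
  have hinv : (⇑σ)^[k] ((⇑σ.symm)^[k] q) = q :=
    (Function.LeftInverse.iterate σ.apply_symm_apply k) q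
  have hcomp : (σL ^ k) ∘ₗ rmul ((⇑σ.symm)^[k] q) = (rmul q) ∘ₗ (σL ^ k) := by
    apply LinearMap.ext
    intro x
    simp only [LinearMap.comp_apply, Module.End.pow_apply]
    show (⇑σ)^[k] (x * (⇑σ.symm)^[k] q) = (⇑σ)^[k] x * q
    rw [hiter_mul, hinv]
  have main : Mat b ((rmul (θ ((⇑σ.symm)^[k] q))) ∘ₗ hσ ^ k)
      = (Mat b ((rmul q) ∘ₗ σL ^ k))ᵀ := by
    rw [Mat_comp, Mat_comp, Mat_pow, Mat_pow, h1, h2, ← Matrix.transpose_pow,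
      ← Matrix.transpose_mul, ← Mat_pow, ← Mat_comp, hcomp, Mat_comp]
  have := congrFun (congrFun main i) j
  simpa [Mat, Matrix.transpose_apply, Module.End.pow_apply, hσ, σL, rmul, θL, Function.comp_def] using this

end key
/-- In the setting of Statement 4, if the fixed basis additionally satisfies
`M_{σ̂} = (M_σ)ᵀ` and `M_{θ(a)} = (M_a)ᵀ` for all `a ∈ A`, then
`M_{R̂}(Θ(f)) = (M_R(f))ᵀ` for every `f ∈ R = A[z;σ]`, i.e. `Θ` is a transposition
between the Hamming extensions `(F[z], R, 𝔳)` and `(F[z], R̂, 𝔳)`. -/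
theorem stmt5 {F A R Rh : Type*} [Field F] [Ring A] [Algebra F A]
    [Ring R] [Ring Rh]
    {m : ℕ} (b : Module.Basis (Fin m) F A)
    (σ : A ≃ₐ[F] A) (θ : A → A)
    (hθlin : ∀ (c : F) (a : A), θ (c • a) = c • θ a)
    (hθadd : ∀ a c : A, θ (a + c) = θ a + θ c)
    (hθmul : ∀ a c : A, θ (a * c) = θ c * θ a)
    (hθone : θ 1 = 1) (hθinv : ∀ a, θ (θ a) = a)
    (ι : A →+* R) (z : R) (hz : ∀ a, ι a * z = z * ι (σ a))
    (rep : (ℕ →₀ A) ≃+ R)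
    (hrep : ∀ p, rep p = ∑ k ∈ p.support, z ^ k * ι (p k))
    (ι' : A →+* Rh) (z' : Rh)
    (hz' : ∀ a, ι' a * z' = z' * ι' (θ (σ.symm (θ a))))
    (rep' : (ℕ →₀ A) ≃+ Rh)
    (hrep' : ∀ p, rep' p = ∑ k ∈ p.support, z' ^ k * ι' (p k))
    (v : R → Fin m → Polynomial F)
    (hv : ∀ r i, v r i = ∑ k ∈ (rep.symm r).support,
      Polynomial.monomial k (b.repr ((rep.symm r) k) i))
    (v' : Rh → Fin m → Polynomial F)
    (hv' : ∀ r i, v' r i = ∑ k ∈ (rep'.symm r).support,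
      Polynomial.monomial k (b.repr ((rep'.symm r) k) i))
    (hMσ : (Matrix.of fun i j => b.repr (θ (σ.symm (θ (b i)))) j)
        = (Matrix.of fun i j => b.repr (σ (b i)) j)ᵀ)
    (hMθ : ∀ a : A, (Matrix.of fun i j => b.repr (b i * θ a) j)
        = (Matrix.of fun i j => b.repr (b i * a) j)ᵀ)
    (Θ : R → Rh)
    (hΘ : ∀ r : R, Θ r = ∑ k ∈ (rep.symm r).support,
      z' ^ k * ι' (θ ((⇑σ.symm)^[k] ((rep.symm r) k))))
    (f : R) (M M' : Matrix (Fin m) (Fin m) (Polynomial F))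
    (hM : ∀ g : R, v (g * f) = Matrix.vecMul (v g) M)
    (hM' : ∀ g : Rh, v' (g * Θ f) = Matrix.vecMul (v' g) M') :
    M' = Mᵀ := by
  classical
  set p : ℕ →₀ A := rep.symm f with hp
  have hθ0 : θ 0 = 0 := by simpa using hθlin 0 0
  -- commutation of ι a with powers of z
  have hcomm : ∀ (a : A) (k : ℕ), ι a * z ^ k = z ^ k * ι ((⇑σ)^[k] a) := by
    intro a k
    induction k generalizing a with
    | zero => simp
    | succ n ih =>
        rw [pow_succ', ← mul_assoc, hz, mul_assoc, ih, ← mul_assoc, ← pow_succ',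
          Function.iterate_succ_apply]
  have hcomm' : ∀ (a : A) (k : ℕ),
      ι' a * z' ^ k = z' ^ k * ι' ((fun x => θ (σ.symm (θ x)))^[k] a) := by
    intro a k
    induction k generalizing a with
    | zero => simp
    | succ n ih =>
        rw [pow_succ', ← mul_assoc, hz', mul_assoc, ih, ← mul_assoc, ← pow_succ',
          Function.iterate_succ_apply]
  -- v at ι (b i) is the i-th standard basis row
  have hvb : ∀ i : Fin m, rep.symm (ι (b i)) = Finsupp.single 0 (b i) := by
    intro i
    rw [AddEquiv.symm_apply_eq, hrep, Finsupp.support_single_ne_zero _ (b.ne_zero i)]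
    simp
  have hvb' : ∀ i : Fin m, rep'.symm (ι' (b i)) = Finsupp.single 0 (b i) := by
    intro i
    rw [AddEquiv.symm_apply_eq, hrep', Finsupp.support_single_ne_zero _ (b.ne_zero i)]
    simp
  have hvι : ∀ i j : Fin m, v (ι (b i)) j = if i = j then 1 else 0 := by
    intro i j
    rw [hv, hvb, Finsupp.support_single_ne_zero _ (b.ne_zero i)]
    simp [Module.Basis.repr_self, Finsupp.single_apply, apply_ite (Polynomial.C (R := F))]
  have hvι' : ∀ i j : Fin m, v' (ι' (b i)) j = if i = j then 1 else 0 := by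
    intro i j
    rw [hv', hvb', Finsupp.support_single_ne_zero _ (b.ne_zero i)]
    simp [Module.Basis.repr_self, Finsupp.single_apply, apply_ite (Polynomial.C (R := F))]
  have hMentry : ∀ i j : Fin m, M i j = v (ι (b i) * f) j := by
    intro i j
    have h := congrFun (hM (ι (b i))) j
    rw [h]
    simp [Matrix.vecMul, dotProduct, hvι, ite_mul, Finset.sum_ite_eq]
  have hM'entry : ∀ i j : Fin m, M' i j = v' (ι' (b i) * Θ f) j := by
    intro i j
    have h := congrFun (hM' (ι' (b i))) j
    rw [h]
    simp [Matrix.vecMul, dotProduct, hvι', ite_mul, Finset.sum_ite_eq]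
  -- the coefficients of ι (b i) * f
  have hqmem : ∀ (i : Fin m) (k : ℕ), (⇑σ)^[k] (b i) * p k ≠ 0 → k ∈ p.support :=
    fun i k hk => Finsupp.mem_support_iff.mpr (fun h => hk (by rw [h, mul_zero]))
  set q : Fin m → (ℕ →₀ A) := fun i =>
    Finsupp.onFinset p.support (fun k => (⇑σ)^[k] (b i) * p k) (hqmem i) with hqdef
  have hq : ∀ i, rep (q i) = ι (b i) * f := by
    intro i
    calc rep (q i) = ∑ k ∈ (q i).support, z ^ k * ι ((⇑σ)^[k] (b i) * p k) := by
          rw [hrep]; rfl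
      _ = ∑ k ∈ p.support, z ^ k * ι ((⇑σ)^[k] (b i) * p k) := by
          refine Finset.sum_subset Finsupp.support_onFinset_subset ?_
          intro k _ hnk
          have h0 : (⇑σ)^[k] (b i) * p k = 0 := by
            simpa [hqdef] using Finsupp.notMem_support_iff.mp hnk
          rw [h0, _root_.map_zero, mul_zero]
      _ = ∑ k ∈ p.support, ι (b i) * (z ^ k * ι (p k)) := by
          refine Finset.sum_congr rfl fun k _ => ?_
          rw [_root_.map_mul, ← mul_assoc, ← hcomm, mul_assoc]
      _ = ι (b i) * f := by
          rw [← Finset.mul_sum, ← hrep, hp, rep.apply_symm_apply]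
  have hMij : ∀ i j : Fin m,
      M i j = ∑ k ∈ p.support,
        Polynomial.monomial k (b.repr ((⇑σ)^[k] (b i) * p k) j) := by
    intro i j
    have hsymm : rep.symm (ι (b i) * f) = q i := by rw [← hq i, rep.symm_apply_apply]
    rw [hMentry, hv, hsymm]
    refine Finset.sum_subset Finsupp.support_onFinset_subset ?_
    intro k _ hnk
    have h0 : (⇑σ)^[k] (b i) * p k = 0 := by
      simpa [hqdef] using Finsupp.notMem_support_iff.mp hnk
    rw [show (q i) k = (⇑σ)^[k] (b i) * p k from rfl, h0, _root_.map_zero,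
      Finsupp.coe_zero, Pi.zero_apply, Polynomial.monomial_zero_right]
  -- the coefficients of ι' (b i) * Θ f
  have hΘf : Θ f = ∑ k ∈ p.support, z' ^ k * ι' (θ ((⇑σ.symm)^[k] (p k))) := by
    rw [hΘ f, ← hp]
  have hq'mem : ∀ (i : Fin m) (k : ℕ),
      (fun x => θ (σ.symm (θ x)))^[k] (b i) * θ ((⇑σ.symm)^[k] (p k)) ≠ 0 →
        k ∈ p.support := by
    intro i k hk
    refine Finsupp.mem_support_iff.mpr (fun h => hk ?_)
    rw [h, Function.iterate_fixed (_root_.map_zero σ.symm) k, hθ0, mul_zero]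
  set q' : Fin m → (ℕ →₀ A) := fun i =>
    Finsupp.onFinset p.support
      (fun k => (fun x => θ (σ.symm (θ x)))^[k] (b i) * θ ((⇑σ.symm)^[k] (p k)))
      (hq'mem i) with hq'def
  have hq' : ∀ i, rep' (q' i) = ι' (b i) * Θ f := by
    intro i
    calc rep' (q' i)
        = ∑ k ∈ (q' i).support,
            z' ^ k * ι' ((fun x => θ (σ.symm (θ x)))^[k] (b i) * θ ((⇑σ.symm)^[k] (p k))) := by
          rw [hrep']; rfl
      _ = ∑ k ∈ p.support,
            z' ^ k * ι' ((fun x => θ (σ.symm (θ x)))^[k] (b i) * θ ((⇑σ.symm)^[k] (p k))) := by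
          refine Finset.sum_subset Finsupp.support_onFinset_subset ?_
          intro k _ hnk
          have h0 : (fun x => θ (σ.symm (θ x)))^[k] (b i) * θ ((⇑σ.symm)^[k] (p k)) = 0 := by
            simpa [hq'def] using Finsupp.notMem_support_iff.mp hnk
          rw [h0, _root_.map_zero, mul_zero]
      _ = ∑ k ∈ p.support, ι' (b i) * (z' ^ k * ι' (θ ((⇑σ.symm)^[k] (p k)))) := by
          refine Finset.sum_congr rfl fun k _ => ?_
          rw [_root_.map_mul, ← mul_assoc, ← hcomm', mul_assoc]
      _ = ι' (b i) * Θ f := by rw [← Finset.mul_sum, ← hΘf]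
  have hM'ij : ∀ i j : Fin m,
      M' i j = ∑ k ∈ p.support,
        Polynomial.monomial k
          (b.repr ((fun x => θ (σ.symm (θ x)))^[k] (b i) * θ ((⇑σ.symm)^[k] (p k))) j) := by
    intro i j
    have hsymm : rep'.symm (ι' (b i) * Θ f) = q' i := by rw [← hq' i, rep'.symm_apply_apply]
    rw [hM'entry, hv', hsymm]
    refine Finset.sum_subset Finsupp.support_onFinset_subset ?_
    intro k _ hnk
    have h0 : (fun x => θ (σ.symm (θ x)))^[k] (b i) * θ ((⇑σ.symm)^[k] (p k)) = 0 := by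
      simpa [hq'def] using Finsupp.notMem_support_iff.mp hnk
    rw [show (q' i) k = (fun x => θ (σ.symm (θ x)))^[k] (b i) * θ ((⇑σ.symm)^[k] (p k)) from rfl,
      h0, _root_.map_zero, Finsupp.coe_zero, Pi.zero_apply, Polynomial.monomial_zero_right]
  -- conclusion
  refine Matrix.ext fun i j => ?_
  rw [Matrix.transpose_apply, hM'ij i j, hMij j i]
  apply Finset.sum_congr rfl
  intro k _
  exact congrArg (Polynomial.monomial k) (key b σ θ hθlin hθadd hMσ hMθ k (p k) i j)
end

section
/- Let A = M_n(K) with K/F a finite field extension admitting a self-dual normal basis D, and let σ be any F-algebra automorphism of A. Writing σ = σ_U ∘ σ_{τ^h} (with σ_U inner and σ_{τ^h} entrywise Frobenius power) and setting σ̂ = θσ^{-1}θ for the transpose involution θ(a) = aᵀ, the matrices of σ and σ̂ as F-linear maps with respect to the induced basis satisfy M_{σ̂} = (M_σ)ᵀ. -/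
open Matrix

set_option linter.unusedSectionVars false

lemma stdBM_transpose {n : ℕ} {K : Type*} [Semiring K] (i j : Fin n) (c : K) :
    (Matrix.single i j c)ᵀ = Matrix.single j i c := by
  ext a b
  simp [Matrix.single, Matrix.transpose_apply, and_comm]

section Key
variable {F K : Type*} [Field F] [Field K] [Finite K] [Algebra F K]
variable {n : ℕ} [NeZero n]

lemma sigma_scalar (σ : Matrix (Fin n) (Fin n) K ≃ₐ[F] Matrix (Fin n) (Fin n) K) (c : K) :
    ∃ d : K, σ (Matrix.scalar (Fin n) c) = Matrix.scalar (Fin n) d := by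
  have hmem : σ (Matrix.scalar (Fin n) c) ∈ Set.range (Matrix.scalar (Fin n)) := by
    rw [Matrix.mem_range_scalar_iff_commute_single']
    intro i j
    have hc : ∀ M : Matrix (Fin n) (Fin n) K,
        σ (Matrix.scalar (Fin n) c) * M = M * σ (Matrix.scalar (Fin n) c) := by
      intro M
      have h1 : σ (Matrix.scalar (Fin n) c * σ.symm M) = σ (σ.symm M * Matrix.scalar (Fin n) c) := by
        congr 1
        exact (Matrix.scalar_commute c (fun r' => mul_comm c r') (σ.symm M)).eq
      rw [_root_.map_mul, _root_.map_mul] at h1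
      simpa using h1
    exact (hc _).symm
  obtain ⟨d, hd⟩ := hmem
  exact ⟨d, hd.symm⟩

lemma scalar_inj {a b : K} (h : Matrix.scalar (Fin n) a = Matrix.scalar (Fin n) b) : a = b := by
  have := congrFun (congrFun (congrArg (fun M => (M : Matrix (Fin n) (Fin n) K)) h) (0 : Fin n)) (0 : Fin n)
  simpa [Matrix.scalar_apply] using this

end Key

section Key2
variable {F K : Type*} [Field F] [Field K] [Finite K] [Algebra F K]
variable {n : ℕ} [NeZero n]

/-- trace of σ(E₀₀) equals 1 -/
lemma trace_sigma_E00 (σ : Matrix (Fin n) (Fin n) K ≃ₐ[F] Matrix (Fin n) (Fin n) K) :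
    Matrix.trace (σ (Matrix.single (0 : Fin n) 0 (1 : K))) = 1 := by
  set E00 : Matrix (Fin n) (Fin n) K := Matrix.single (0 : Fin n) 0 (1 : K) with hE00
  set e : Matrix (Fin n) (Fin n) K := σ E00 with he
  have hidem : e * e = e := by
    rw [he, ← _root_.map_mul]
    congr 1
    rw [hE00, Matrix.single_mul_single_same, one_mul]
  -- e ≠ 0
  have hne : e ≠ 0 := by
    intro h
    have : E00 = 0 := by
      have := congrArg σ.symm h
      simpa [he] using this
    have := congrFun (congrFun (congrArg (fun M => (M : Matrix (Fin n) (Fin n) K)) this) 0) 0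
    simp [hE00, Matrix.single_apply_same] at this
  -- find nonzero entry
  obtain ⟨r0, c0, hrc⟩ : ∃ r c, e r c ≠ 0 := by
    by_contra hco
    push_neg at hco
    exact hne (Matrix.ext fun i j => hco i j)
  set w : Fin n → K := e.mulVec (Pi.single c0 1) with hwdef
  have hwr0 : w r0 ≠ 0 := by
    simp only [hwdef, Matrix.mulVec_single_one]
    exact hrc
  have hw : e.mulVec w = w := by
    rw [hwdef, Matrix.mulVec_mulVec, hidem]
  -- U and V
  set U : Matrix (Fin n) (Fin n) K :=
    Matrix.of (fun r i => (σ (Matrix.single i 0 (1 : K))).mulVec w r) with hU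
  set V : Matrix (Fin n) (Fin n) K :=
    Matrix.of (fun j m => (w r0)⁻¹ * (σ (Matrix.single (0 : Fin n) j (1 : K))) r0 m) with hV
  have hprod : ∀ (M : Matrix (Fin n) (Fin n) K) (r k : Fin n),
      (M * U) r k = (M * σ (Matrix.single k 0 (1 : K))).mulVec w r := by
    intro M r k
    rw [← Matrix.mulVec_mulVec]
    simp only [Matrix.mul_apply, Matrix.mulVec, dotProduct, hU, Matrix.of_apply]
  have hEU : ∀ (j : Fin n) (r k : Fin n),
      (σ (Matrix.single (0 : Fin n) j (1 : K)) * U) r k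
        = if j = k then w r else 0 := by
    intro j r k
    rw [hprod, ← _root_.map_mul]
    by_cases hjk : j = k
    · subst hjk
      rw [Matrix.single_mul_single_same, one_mul, if_pos rfl, ← hE00, ← he]
      rw [hw]
    · rw [Matrix.single_mul_single_of_ne (h := hjk), if_neg hjk, map_zero,
        Matrix.zero_mulVec]
      rfl
  have hVU : V * U = 1 := by
    ext j k
    have : (V * U) j k = (w r0)⁻¹ * (σ (Matrix.single (0 : Fin n) j (1 : K)) * U) r0 k := by
      simp only [Matrix.mul_apply, hV, Matrix.of_apply, Finset.mul_sum, mul_assoc]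
    rw [this, hEU]
    by_cases hjk : j = k
    · subst hjk
      simp [inv_mul_cancel₀ hwr0]
    · simp [hjk, Matrix.one_apply_ne hjk]
  have hUV : U * V = 1 := mul_eq_one_comm.mpr hVU
  -- e * U = U * E00
  have heU : e * U = U * E00 := by
    ext r k
    rw [hprod, he, ← _root_.map_mul]
    by_cases hk : (0 : Fin n) = k
    · subst hk
      rw [hE00, Matrix.single_mul_single_same, one_mul]
      have hrhs : (U * E00) r 0 = U r 0 := by
        simp only [Matrix.mul_apply, hE00]
        rw [Finset.sum_eq_single (0 : Fin n)]
        · simp [Matrix.single_apply_same]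
        · intro b _ hb
          have : Matrix.single (0:Fin n) (0:Fin n) (1:K) b 0 = 0 := by
            rw [Matrix.single_apply_of_ne]
            rintro ⟨h1, -⟩
            exact hb h1.symm
          exact mul_eq_zero_of_right _ this
        · simp
      rw [hrhs]
      simp only [hU, Matrix.of_apply]
    · rw [hE00, Matrix.single_mul_single_of_ne (h := hk), map_zero,
        Matrix.zero_mulVec]
      have hrhs : (U * E00) r k = 0 := by
        simp only [Matrix.mul_apply, hE00]
        apply Finset.sum_eq_zero
        intro b _
        rw [Matrix.single_apply_of_ne]
        · ring
        · rintro ⟨h1, h2⟩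
          exact hk h2
      rw [hrhs]
      rfl
  -- conclude
  have : e = U * E00 * V := by
    calc e = e * (U * V) := by rw [hUV, mul_one]
    _ = (e * U) * V := by rw [mul_assoc]
    _ = U * E00 * V := by rw [heU]
  rw [this, Matrix.trace_mul_comm, ← mul_assoc, hVU, one_mul, hE00,
    Matrix.trace_single_eq_same]

end Key2

section Key3
variable {F K : Type*} [Field F] [Field K] [Finite K] [Algebra F K]
variable {n : ℕ} [NeZero n]

lemma key_trace (σ : Matrix (Fin n) (Fin n) K ≃ₐ[F] Matrix (Fin n) (Fin n) K)
    (x : Matrix (Fin n) (Fin n) K) :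
    Algebra.trace F K (Matrix.trace (σ x)) = Algebra.trace F K (Matrix.trace x) := by
  classical
  set φ : K → K := fun c => Classical.choose (sigma_scalar σ c) with hφdef
  have hφ : ∀ c, σ (Matrix.scalar (Fin n) c) = Matrix.scalar (Fin n) (φ c) := fun c =>
    Classical.choose_spec (sigma_scalar σ c)
  have hadd : ∀ a b, φ (a + b) = φ a + φ b := by
    intro a b
    apply scalar_inj (n := n)
    rw [← hφ, _root_.map_add (Matrix.scalar (Fin n)), _root_.map_add σ, hφ, hφ,
      _root_.map_add (Matrix.scalar (Fin n))]
  have hmul : ∀ a b, φ (a * b) = φ a * φ b := by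
    intro a b
    apply scalar_inj (n := n)
    rw [← hφ, _root_.map_mul (Matrix.scalar (Fin n)), _root_.map_mul σ, hφ, hφ,
      _root_.map_mul (Matrix.scalar (Fin n))]
  have hone : φ 1 = 1 := by
    apply scalar_inj (n := n)
    rw [← hφ, _root_.map_one (Matrix.scalar (Fin n)), _root_.map_one σ]
  have hzero : φ 0 = 0 := by
    apply scalar_inj (n := n)
    rw [← hφ, _root_.map_zero (Matrix.scalar (Fin n)), _root_.map_zero σ]
  have hscalar_alg : ∀ r : F, Matrix.scalar (Fin n) (algebraMap F K r)
      = algebraMap F (Matrix (Fin n) (Fin n) K) r := by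
    intro r
    rw [Matrix.algebraMap_eq_diagonal, Matrix.scalar_apply]
    congr 1
  have hcommutes : ∀ r : F, φ (algebraMap F K r) = algebraMap F K r := by
    intro r
    apply scalar_inj (n := n)
    rw [← hφ, hscalar_alg, AlgEquiv.commutes]
  set ψ : K →ₐ[F] K :=
    { toFun := φ
      map_one' := hone
      map_mul' := hmul
      map_zero' := hzero
      map_add' := hadd
      commutes' := hcommutes } with hψ
  have hbij : Function.Bijective ψ :=
    (Finite.injective_iff_bijective).mp ψ.toRingHom.injective
  set eqv : K ≃ₐ[F] K := AlgEquiv.ofBijective ψ hbij with heqv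
  have heqv_apply : ∀ c, eqv c = φ c := fun c => rfl
  -- trace of σ on std basis matrices
  have hstd : ∀ (i j : Fin n) (c : K),
      Matrix.trace (σ (Matrix.single i j c)) = if i = j then φ c else 0 := by
    intro i j c
    by_cases hij : i = j
    · subst hij
      rw [if_pos rfl]
      have hdecomp : Matrix.single i i c
          = Matrix.scalar (Fin n) c * Matrix.single (0 : Fin n) (0 : Fin n) (1 : K)
            + (Matrix.single i (0 : Fin n) c * Matrix.single (0 : Fin n) i (1 : K)
              - Matrix.single (0 : Fin n) i (1 : K) * Matrix.single i (0 : Fin n) c) := by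
        rw [Matrix.single_mul_single_same, Matrix.single_mul_single_same, mul_one, one_mul,
          Matrix.scalar_apply, ← Matrix.smul_eq_diagonal_mul, Matrix.smul_single,
          smul_eq_mul, mul_one]
        abel
      rw [hdecomp, _root_.map_add σ, _root_.map_sub σ, _root_.map_mul σ, _root_.map_mul σ,
        _root_.map_mul σ, Matrix.trace_add, Matrix.trace_sub,
        Matrix.trace_mul_comm (σ (Matrix.single (0 : Fin n) i (1 : K))),
        sub_self, add_zero, hφ, Matrix.scalar_apply, ← Matrix.smul_eq_diagonal_mul,
        Matrix.trace_smul, trace_sigma_E00, smul_eq_mul, mul_one]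
    · rw [if_neg hij]
      have hdecomp : Matrix.single i j c
          = Matrix.single i i (1 : K) * Matrix.single i j c
            - Matrix.single i j c * Matrix.single i i (1 : K) := by
        rw [Matrix.single_mul_single_same, one_mul,
          Matrix.single_mul_single_of_ne (h := Ne.symm hij), sub_zero]
      rw [hdecomp, _root_.map_sub σ, _root_.map_mul σ, _root_.map_mul σ, Matrix.trace_sub,
        Matrix.trace_mul_comm, sub_self]
  -- trace formula
  have hsx : σ x = ∑ i : Fin n, ∑ j : Fin n, σ (Matrix.single i j (x i j)) := by
    conv_lhs => rw [Matrix.matrix_eq_sum_single x]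
    rw [map_sum]
    exact Finset.sum_congr rfl (fun i _ => map_sum σ _ _)
  have htr : Matrix.trace (σ x) = φ (Matrix.trace x) := by
    rw [hsx, Matrix.trace_sum]
    calc ∑ i : Fin n, Matrix.trace (∑ j : Fin n, σ (Matrix.single i j (x i j)))
        = ∑ i : Fin n, ∑ j : Fin n, Matrix.trace (σ (Matrix.single i j (x i j))) := by
          exact Finset.sum_congr rfl (fun i _ => Matrix.trace_sum _ _)
      _ = ∑ i : Fin n, φ (x i i) := by
          refine Finset.sum_congr rfl (fun i _ => ?_)
          rw [Finset.sum_congr rfl (fun j _ => hstd i j (x i j))]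
          simp
      _ = φ (∑ i : Fin n, x i i) := (map_sum ψ (fun i => x i i) Finset.univ).symm
      _ = φ (Matrix.trace x) := rfl
  rw [htr, ← heqv_apply, Algebra.trace_eq_of_algEquiv]

end Key3

section Repr
variable {F K : Type*} [Field F] [Field K] [Algebra F K]
variable {t n : ℕ}

lemma repr_eq (D : Module.Basis (Fin t) F K)
    (hselfdual : ∀ i j : Fin t,
      Algebra.trace F K (D i * D j) = if i = j then 1 else 0)
    (B : Module.Basis (Fin t × Fin n × Fin n) F (Matrix (Fin n) (Fin n) K))
    (hB : ∀ (k : Fin t) (i j : Fin n), B (k, i, j) = Matrix.single i j (D k))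
    (x : Matrix (Fin n) (Fin n) K) (p : Fin t × Fin n × Fin n) :
    B.repr x p = Algebra.trace F K (Matrix.trace (x * (B p)ᵀ)) := by
  classical
  set L1 : Matrix (Fin n) (Fin n) K →ₗ[F] F :=
    (Finsupp.lapply p) ∘ₗ (B.repr : Matrix (Fin n) (Fin n) K ≃ₗ[F] _).toLinearMap with hL1
  set L2 : Matrix (Fin n) (Fin n) K →ₗ[F] F :=
    (Algebra.trace F K) ∘ₗ (Matrix.traceLinearMap (Fin n) F K) ∘ₗ
      (LinearMap.mulRight F ((B p)ᵀ)) with hL2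
  have hL : L1 = L2 := by
    apply B.ext
    intro pp
    obtain ⟨k'', i'', j''⟩ := pp
    obtain ⟨k, i, j⟩ := p
    have hL1v : L1 (B (k'', i'', j'')) = if (k'', i'', j'') = (k, i, j) then (1 : F) else 0 := by
      simp [hL1, Module.Basis.repr_self, Finsupp.single_apply]
    have hL2v : L2 (B (k'', i'', j'')) = if (k'', i'', j'') = (k, i, j) then (1 : F) else 0 := by
      simp only [hL2, LinearMap.coe_comp, Function.comp_apply, LinearMap.mulRight_apply,
        Matrix.traceLinearMap_apply]
      rw [hB, hB, stdBM_transpose]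
      by_cases hj : j'' = j
      · subst hj
        rw [Matrix.single_mul_single_same]
        by_cases hi : i'' = i
        · subst hi
          rw [Matrix.trace_single_eq_same, hselfdual]
          by_cases hk : k'' = k
          · subst hk; simp
          · simp [hk]
        · rw [Matrix.trace_single_eq_of_ne _ _ _ hi]
          simp [Prod.ext_iff, hi]
      · rw [Matrix.single_mul_single_of_ne (h := hj)]
        simp [Prod.ext_iff, hj]
    rw [hL1v, hL2v]
  have := congrFun (congrArg (fun (L : Matrix (Fin n) (Fin n) K →ₗ[F] F) => (L : _ → F)) hL) x
  simpa [hL1, hL2] using this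

end Repr


/-- Let `A = M_n(K)` where `K/F` is a finite field extension with a
self-dual normal basis `D`, and let `σ` be any `F`-algebra automorphism of `A`.
With `θ(a) = aᵀ` and `σ̂ = θ∘σ⁻¹∘θ`, the matrices of `σ` and `σ̂` as `F`-linear maps
with respect to the induced basis `{α_k E_ij}` satisfy `M_{σ̂} = (M_σ)ᵀ`
(stated entrywise: `(M_{σ̂})_{p p'} = (M_σ)_{p' p}`). -/
theorem stmt9 {F K : Type*} [Field F] [Fintype F] [Field K] [Fintype K] [Algebra F K]
    {t n : ℕ} (ht : 0 < t) (q : ℕ) (hq : q = Fintype.card F)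
    (hcard : Fintype.card K = q ^ t)
    (α : K) (D : Module.Basis (Fin t) F K)
    (hnormal : ∀ k : Fin t, D k = α ^ q ^ (k : ℕ))
    (hselfdual : ∀ i j : Fin t,
      Algebra.trace F K (D i * D j) = if i = j then 1 else 0)
    (B : Module.Basis (Fin t × Fin n × Fin n) F (Matrix (Fin n) (Fin n) K))
    (hB : ∀ (k : Fin t) (i j : Fin n), B (k, i, j) = Matrix.single i j (D k))
    (σ : Matrix (Fin n) (Fin n) K ≃ₐ[F] Matrix (Fin n) (Fin n) K) :
    ∀ p p' : Fin t × Fin n × Fin n,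
      B.repr ((σ.symm ((B p)ᵀ))ᵀ) p' = B.repr (σ (B p')) p := by
  intro p p'
  haveI : NeZero n := ⟨(Fin.pos p.2.1).ne'⟩
  rw [repr_eq D hselfdual B hB, repr_eq D hselfdual B hB]
  have h1 : (σ.symm ((B p)ᵀ))ᵀ * (B p')ᵀ = (B p' * σ.symm ((B p)ᵀ))ᵀ := by
    rw [Matrix.transpose_mul]
  rw [h1, Matrix.trace_transpose]
  have h2 : σ (B p') * (B p)ᵀ = σ (B p' * σ.symm ((B p)ᵀ)) := by
    rw [_root_.map_mul σ, AlgEquiv.apply_symm_apply]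
  rw [h2, key_trace]
end

section
/- Let C be a commutative ring, σ an automorphism with σ^n = id, u a unit fixed by σ, ℛ = C[x;σ]/⟨x^n − u⟩ and ℛ̂ = C[x;σ]/⟨x^n − u^{-1}⟩. Then the map Θ : ℛ → ℛ̂ defined by Θ(Σ_{i=0}^{n−1} a_i x^i) = Σ_{i=0}^{n−1} σ^{−i}(a_i) x^{−i} is a ring anti-isomorphism. -/
/-- With `C` commutative, `σ` an automorphism with `σ^n = id`, `u` a unit
fixed by `σ`, `ℛ = C[x;σ]/⟨x^n − u⟩` and `ℛ̂ = C[x;σ]/⟨x^n − u⁻¹⟩` (both presented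
abstractly as free left `C`-modules on `1, x, …, x^{n-1}` with the skew relations), the
map `Θ(Σ a_i x^i) = Σ σ^{-i}(a_i) x^{-i}` (where `x^{-1} = u·x^{n-1}` in `ℛ̂`) is a
ring anti-isomorphism. -/
theorem stmt11 {C R Rh : Type*} [CommRing C] [Ring R] [Ring Rh]
    (σ : C ≃+* C) (n : ℕ) (hn : 0 < n) (hσn : ∀ a : C, (⇑σ)^[n] a = a)
    (u : Cˣ) (huσ : σ (u : C) = u)
    (ι : C →+* R) (x : R) (hx : ∀ a : C, x * ι a = ι (σ a) * x)
    (hxn : x ^ n = ι u)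
    (rep : (Fin n → C) ≃+ R)
    (hrep : ∀ c : Fin n → C, rep c = ∑ i : Fin n, ι (c i) * x ^ (i : ℕ))
    (ι' : C →+* Rh) (x' : Rh) (hx' : ∀ a : C, x' * ι' a = ι' (σ a) * x')
    (hxn' : x' ^ n = ι' ((u⁻¹ : Cˣ) : C))
    (rep' : (Fin n → C) ≃+ Rh)
    (hrep' : ∀ c : Fin n → C, rep' c = ∑ i : Fin n, ι' (c i) * x' ^ (i : ℕ)) :
    ∀ Θ : R → Rh,
      (∀ r : R, Θ r = ∑ i : Fin n,
        ι' ((⇑σ.symm)^[(i : ℕ)] (rep.symm r i)) * (ι' (u : C) * x' ^ (n - 1)) ^ (i : ℕ)) →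
      Function.Bijective Θ ∧
      (∀ a b : R, Θ (a + b) = Θ a + Θ b) ∧
      (∀ a b : R, Θ (a * b) = Θ b * Θ a) ∧
      Θ 1 = 1 := by
  intro Θ hΘ
  haveI : NeZero n := ⟨hn.ne'⟩
  -- basic facts on iterates of σ and σ.symm
  have hsmul : ∀ (m : ℕ) (a b : C),
      (⇑σ.symm)^[m] (a * b) = (⇑σ.symm)^[m] a * (⇑σ.symm)^[m] b := by
    intro m
    induction m with
    | zero => intro a b; rfl
    | succ p ih =>
      intro a b
      rw [Function.iterate_succ_apply, map_mul]
      exact ih _ _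
  have hsadd : ∀ (m : ℕ) (a b : C),
      (⇑σ.symm)^[m] (a + b) = (⇑σ.symm)^[m] a + (⇑σ.symm)^[m] b := by
    intro m
    induction m with
    | zero => intro a b; rfl
    | succ p ih =>
      intro a b
      rw [Function.iterate_succ_apply, map_add]
      exact ih _ _
  have hszero : ∀ m : ℕ, (⇑σ.symm)^[m] (0 : C) = 0 := by
    intro m
    induction m with
    | zero => rfl
    | succ p ih =>
      rw [Function.iterate_succ_apply, map_zero]
      exact ih
  have hcancel : ∀ (m : ℕ) (a : C), (⇑σ.symm)^[m] ((⇑σ)^[m] a) = a :=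
    fun m a => (Function.LeftInverse.iterate σ.symm_apply_apply m) a
  have hcancel' : ∀ (m : ℕ) (a : C), (⇑σ)^[m] ((⇑σ.symm)^[m] a) = a :=
    fun m a => (Function.LeftInverse.iterate σ.apply_symm_apply m) a
  have hsn : ∀ a : C, (⇑σ.symm)^[n] a = a := by
    intro a
    conv_lhs => rw [← hσn a]
    exact hcancel n a
  have hu : ∀ m : ℕ, (⇑σ)^[m] (u : C) = u := by
    intro m
    induction m with
    | zero => rfl
    | succ p ih =>
      rw [Function.iterate_succ_apply, huσ]
      exact ih
  have huinv : σ.symm (u : C) = u := by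
    conv_lhs => rw [← huσ]
    exact σ.symm_apply_apply _
  have hu' : ∀ m : ℕ, (⇑σ.symm)^[m] (u : C) = u := by
    intro m
    induction m with
    | zero => rfl
    | succ p ih =>
      rw [Function.iterate_succ_apply, huinv]
      exact ih
  -- commutation of powers of x with coefficients
  have hxk : ∀ (k : ℕ) (a : C), x ^ k * ι a = ι ((⇑σ)^[k] a) * x ^ k := by
    intro k
    induction k with
    | zero => intro a; simp
    | succ m ih =>
      intro a
      calc x ^ (m + 1) * ι a = x ^ m * (x * ι a) := by rw [pow_succ, mul_assoc]
        _ = x ^ m * ι (σ a) * x := by rw [hx, ← mul_assoc]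
        _ = ι ((⇑σ)^[m] (σ a)) * x ^ m * x := by rw [ih]
        _ = ι ((⇑σ)^[m + 1] a) * x ^ (m + 1) := by
            rw [mul_assoc, ← pow_succ, Function.iterate_succ_apply]
  -- the inverse y of x'
  obtain ⟨y, hy⟩ : ∃ y : Rh, y = ι' (u : C) * x' ^ (n - 1) := ⟨_, rfl⟩
  simp only [← hy] at hΘ
  have hn1 : n - 1 + 1 = n := Nat.succ_pred_eq_of_pos hn
  have hyx : y * x' = 1 := by
    rw [hy, mul_assoc, ← pow_succ, hn1, hxn', ← map_mul, Units.mul_inv, map_one]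
  have hxy : x' * y = 1 := by
    rw [hy, ← mul_assoc, hx', huσ, mul_assoc, ← pow_succ', hn1, hxn', ← map_mul,
      Units.mul_inv, map_one]
  have hcomm : x' * y = y * x' := by rw [hxy, hyx]
  have hxyk : ∀ k : ℕ, x' ^ k * y ^ k = 1 := by
    intro k
    have hc : Commute x' y := hcomm
    rw [← hc.mul_pow, hxy, one_pow]
  have hyn : y ^ n = ι' (u : C) := by
    have h2 := hxyk n
    rw [hxn'] at h2
    calc y ^ n = ι' ((u : C) * ((u⁻¹ : Cˣ) : C)) * y ^ n := by
          rw [Units.mul_inv, map_one, one_mul]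
      _ = ι' (u : C) * (ι' ((u⁻¹ : Cˣ) : C) * y ^ n) := by rw [map_mul, mul_assoc]
      _ = ι' (u : C) := by rw [h2, mul_one]
  have hyc : ∀ a : C, y * ι' a = ι' (σ.symm a) * y := by
    intro a
    have h1 : x' * ι' (σ.symm a) = ι' a * x' := by
      rw [hx', RingEquiv.apply_symm_apply]
    calc y * ι' a = y * (ι' a * x') * y := by rw [mul_assoc, mul_assoc, hxy, mul_one]
      _ = y * (x' * ι' (σ.symm a)) * y := by rw [h1]
      _ = ι' (σ.symm a) * y := by rw [← mul_assoc, hyx, one_mul]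
  have hyk : ∀ (k : ℕ) (a : C), y ^ k * ι' a = ι' ((⇑σ.symm)^[k] a) * y ^ k := by
    intro k
    induction k with
    | zero => intro a; simp
    | succ m ih =>
      intro a
      calc y ^ (m + 1) * ι' a = y ^ m * (y * ι' a) := by rw [pow_succ, mul_assoc]
        _ = y ^ m * ι' (σ.symm a) * y := by rw [hyc, ← mul_assoc]
        _ = ι' ((⇑σ.symm)^[m] (σ.symm a)) * y ^ m * y := by rw [ih]
        _ = ι' ((⇑σ.symm)^[m + 1] a) * y ^ (m + 1) := by
            rw [mul_assoc, ← pow_succ, Function.iterate_succ_apply]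
  -- expression of y powers in the standard basis
  have hypow : ∀ i : Fin n,
      y ^ (i : ℕ) = ι' (if i = 0 then 1 else (u : C)) * x' ^ (((-i : Fin n)) : ℕ) := by
    intro i
    have hi := i.isLt
    by_cases h0 : i = 0
    · subst h0; simp
    · have hv : (i : ℕ) ≠ 0 := fun h => h0 (Fin.val_eq_zero_iff.mp h)
      have hcoe : ((-i : Fin n) : ℕ) = n - (i : ℕ) := by
        rw [Fin.coe_neg, Nat.mod_eq_of_lt (by omega)]
      have hsplit : x' ^ n = x' ^ (n - (i : ℕ)) * x' ^ (i : ℕ) := by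
        rw [← pow_add]
        congr 1
        omega
      have key : y ^ (i : ℕ) = ι' (u : C) * x' ^ (n - (i : ℕ)) := by
        calc y ^ (i : ℕ) = ι' ((u : C) * ((u⁻¹ : Cˣ) : C)) * y ^ (i : ℕ) := by
              rw [Units.mul_inv, map_one, one_mul]
          _ = ι' (u : C) * (x' ^ n * y ^ (i : ℕ)) := by rw [map_mul, ← hxn', mul_assoc]
          _ = ι' (u : C) * (x' ^ (n - (i : ℕ)) * (x' ^ (i : ℕ) * y ^ (i : ℕ))) := by
              rw [hsplit, mul_assoc]
          _ = ι' (u : C) * x' ^ (n - (i : ℕ)) := by rw [hxyk, mul_one]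
      rw [if_neg h0, hcoe]
      exact key
  -- coefficients of monomials
  have hsingle : ∀ (i : Fin n) (a : C), rep.symm (ι a * x ^ (i : ℕ)) = Pi.single i a := by
    intro i a
    have h1 : rep (Pi.single i a) = ι a * x ^ (i : ℕ) := by
      rw [hrep]
      have hz : ∀ b ∈ Finset.univ, b ≠ i → ι ((Pi.single i a : Fin n → C) b) * x ^ (b : ℕ) = 0 := by
        intro b _ hb
        simp [Pi.single_eq_of_ne hb]
      rw [Finset.sum_eq_single_of_mem i (Finset.mem_univ i) hz, Pi.single_eq_same]
    rw [← h1, AddEquiv.symm_apply_apply]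
  -- Θ on monomials
  have hΘMfin : ∀ (i : Fin n) (a : C),
      Θ (ι a * x ^ (i : ℕ)) = ι' ((⇑σ.symm)^[(i : ℕ)] a) * y ^ (i : ℕ) := by
    intro i a
    rw [hΘ, hsingle]
    have hz : ∀ b ∈ Finset.univ, b ≠ i →
        ι' ((⇑σ.symm)^[(b : ℕ)] ((Pi.single i a : Fin n → C) b)) * y ^ (b : ℕ) = 0 := by
      intro b _ hb
      simp [Pi.single_eq_of_ne hb, hszero]
    rw [Finset.sum_eq_single_of_mem i (Finset.mem_univ i) hz, Pi.single_eq_same]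
  have hΘM' : ∀ (k : ℕ), k < n → ∀ a : C,
      Θ (ι a * x ^ k) = ι' ((⇑σ.symm)^[k] a) * y ^ k :=
    fun k hk a => hΘMfin ⟨k, hk⟩ a
  -- additivity
  have hadd : ∀ a b : R, Θ (a + b) = Θ a + Θ b := by
    intro r s
    rw [hΘ, hΘ, hΘ, ← Finset.sum_add_distrib]
    refine Finset.sum_congr rfl fun i _ => ?_
    rw [map_add, Pi.add_apply, hsadd, map_add, add_mul]
  -- Θ as an additive monoid hom
  let ΘH : R →+ Rh := AddMonoidHom.mk' Θ hadd
  have mapsum : ∀ f : Fin n → R, Θ (∑ i : Fin n, f i) = ∑ i : Fin n, Θ (f i) := by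
    intro f
    exact map_sum ΘH f Finset.univ
  -- Θ 1 = 1
  have hone : Θ 1 = 1 := by
    simpa using hΘM' 0 hn (1 : C)
  -- anti-multiplicativity on monomials
  have hmono : ∀ (i j : Fin n) (a b : C),
      Θ (ι a * x ^ (i : ℕ) * (ι b * x ^ (j : ℕ)))
        = Θ (ι b * x ^ (j : ℕ)) * Θ (ι a * x ^ (i : ℕ)) := by
    intro i j a b
    have hi := i.isLt
    have hj := j.isLt
    have hab : ι a * x ^ (i : ℕ) * (ι b * x ^ (j : ℕ))
        = ι (a * (⇑σ)^[(i : ℕ)] b) * x ^ ((i : ℕ) + (j : ℕ)) := by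
      rw [mul_assoc, ← mul_assoc (x ^ (i : ℕ)), hxk, mul_assoc, ← pow_add, ← mul_assoc,
        ← map_mul]
    rw [hab, hΘM' (j : ℕ) hj b, hΘM' (i : ℕ) hi a]
    have hrhs : ι' ((⇑σ.symm)^[(j : ℕ)] b) * y ^ (j : ℕ)
          * (ι' ((⇑σ.symm)^[(i : ℕ)] a) * y ^ (i : ℕ))
        = ι' ((⇑σ.symm)^[(j : ℕ)] b * (⇑σ.symm)^[(i : ℕ) + (j : ℕ)] a)
          * y ^ ((i : ℕ) + (j : ℕ)) := by
      rw [mul_assoc, ← mul_assoc (y ^ (j : ℕ)), hyk, mul_assoc, ← pow_add, ← mul_assoc,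
        ← map_mul, ← Function.iterate_add_apply, Nat.add_comm (j : ℕ) (i : ℕ)]
    rw [hrhs]
    rcases Nat.lt_or_ge ((i : ℕ) + (j : ℕ)) n with h | h
    · rw [hΘM' ((i : ℕ) + (j : ℕ)) h]
      have hc1 : (⇑σ.symm)^[(i : ℕ) + (j : ℕ)] (a * (⇑σ)^[(i : ℕ)] b)
          = (⇑σ.symm)^[(j : ℕ)] b * (⇑σ.symm)^[(i : ℕ) + (j : ℕ)] a := by
        rw [hsmul, Nat.add_comm (i : ℕ) (j : ℕ), Function.iterate_add_apply,
          Function.iterate_add_apply, hcancel]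
        ring
      rw [hc1]
    · obtain ⟨k, hkn, hkl⟩ : ∃ k, (i : ℕ) + (j : ℕ) = k + n ∧ k < n :=
        ⟨(i : ℕ) + (j : ℕ) - n, by omega, by omega⟩
      have e2 : (⇑σ.symm)^[k] ((⇑σ)^[(i : ℕ)] b) = (⇑σ.symm)^[(j : ℕ)] b := by
        have e5 : (i : ℕ) = k + (n - (j : ℕ)) := by omega
        rw [e5, Function.iterate_add_apply, hcancel]
        conv_lhs => rw [← hcancel' (j : ℕ) b]
        rw [← Function.iterate_add_apply, show n - (j : ℕ) + (j : ℕ) = n from by omega, hσn]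
      have hc2 : (⇑σ.symm)^[k] (a * (⇑σ)^[(i : ℕ)] b * (u : C))
          = (⇑σ.symm)^[(j : ℕ)] b * (⇑σ.symm)^[k] a * (u : C) := by
        rw [hsmul, hsmul, e2, hu']
        ring
      rw [hkn, pow_add, hxn, hxk, hu, ← mul_assoc, ← map_mul, hΘM' k hkl,
        Function.iterate_add_apply, hsn, pow_add, hyn, hyk, hu', ← mul_assoc, ← map_mul,
        hc2]
  -- full anti-multiplicativity
  have hmul : ∀ a b : R, Θ (a * b) = Θ b * Θ a := by
    intro r s
    have key : ∀ cr cs : Fin n → C,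
        Θ ((∑ i : Fin n, ι (cr i) * x ^ (i : ℕ)) * ∑ j : Fin n, ι (cs j) * x ^ (j : ℕ))
          = Θ (∑ j : Fin n, ι (cs j) * x ^ (j : ℕ))
            * Θ (∑ i : Fin n, ι (cr i) * x ^ (i : ℕ)) := by
      intro cr cs
      rw [Finset.sum_mul_sum]
      simp only [mapsum]
      rw [Finset.sum_mul_sum, Finset.sum_comm]
      exact Finset.sum_congr rfl fun j _ => Finset.sum_congr rfl fun i _ =>
        hmono i j (cr i) (cs j)
    rw [show r = rep (rep.symm r) from (rep.apply_symm_apply r).symm,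
      show s = rep (rep.symm s) from (rep.apply_symm_apply s).symm, hrep, hrep]
    exact key _ _
  -- bijectivity
  have hbij : Function.Bijective Θ := by
    set T : (Fin n → C) → (Fin n → C) :=
      fun c j => (⇑σ.symm)^[((-j : Fin n) : ℕ)] (c (-j)) * (if j = 0 then 1 else (u : C))
      with hT
    set T' : (Fin n → C) → (Fin n → C) :=
      fun d i => (⇑σ)^[(i : ℕ)] (d (-i) * (if i = 0 then 1 else ((u⁻¹ : Cˣ) : C)))
      with hT'
    have hΘT : ∀ r : R, Θ r = rep' (T (rep.symm r)) := by
      intro r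
      rw [hΘ, hrep', ← Equiv.sum_comp (Equiv.neg (Fin n))
        (fun j : Fin n => ι' (T (rep.symm r) j) * x' ^ (j : ℕ))]
      refine Finset.sum_congr rfl fun i _ => ?_
      simp only [Equiv.neg_apply, hT, neg_neg, neg_eq_zero]
      rw [hypow i, ← mul_assoc, ← map_mul]
    have h1 : ∀ c, T' (T c) = c := by
      intro c
      funext i
      simp only [hT, hT', neg_neg, neg_eq_zero]
      by_cases h0 : i = 0
      · subst h0; simp
      · rw [if_neg h0, if_neg h0, mul_assoc, Units.mul_inv, mul_one, hcancel']
    have h2 : ∀ d, T (T' d) = d := by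
      intro d
      funext j
      simp only [hT, hT', neg_neg, neg_eq_zero]
      rw [hcancel]
      by_cases h0 : j = 0
      · subst h0; simp
      · rw [if_neg h0, if_neg h0, mul_assoc, Units.inv_mul, mul_one]
    have hTbij : Function.Bijective T :=
      ⟨Function.LeftInverse.injective h1, Function.RightInverse.surjective h2⟩
    have hfun : Θ = ⇑rep' ∘ T ∘ ⇑rep.symm := funext hΘT
    rw [hfun]
    exact rep'.bijective.comp (hTbij.comp rep.symm.bijective)
  exact ⟨hbij, hadd, hmul, hone⟩
end

section
/- With ℛ = C[x;σ]/⟨x^n − u⟩, ℛ̂ = C[x;σ]/⟨x^n − u^{-1}⟩ and coordinate maps 𝔳, 𝔳̂ given by the basis {1, x, …, x^{n−1}}, the anti-isomorphism Θ(Σ a_i x^i) = Σ σ^{−i}(a_i) x^{−i} satisfies M_{ℛ̂}(Θ(f)) = (M_ℛ(f))ᵀ for every f ∈ ℛ. In particular, for f = Σ_{i=0}^{n−1} a_i x^i, the matrix M_ℛ(f) has (k, j)-entry σ^k(a_{j−k}) when j ≥ k and u·σ^k(a_{n+j−k}) when j < k. -/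
open Matrix

section helpers

variable {C R : Type*} [CommRing C] [Ring R]

lemma aux_comm_pow (σ : C ≃+* C) (ι : C →+* R) (x : R)
    (hx : ∀ a : C, x * ι a = ι (σ a) * x) (k : ℕ) (a : C) :
    x ^ k * ι a = ι ((⇑σ)^[k] a) * x ^ k := by
  induction k generalizing a with
  | zero => simp
  | succ k ih =>
      rw [pow_succ, mul_assoc, hx, ← mul_assoc, ih (σ a), ← Function.iterate_succ_apply,
        mul_assoc, ← pow_succ]

lemma aux_iter_mul (σ : C ≃+* C) (k : ℕ) (a b : C) :
    (⇑σ)^[k] (a * b) = (⇑σ)^[k] a * (⇑σ)^[k] b := by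
  induction k with
  | zero => rfl
  | succ k ih => rw [Function.iterate_succ_apply', ih, _root_.map_mul,
      Function.iterate_succ_apply', Function.iterate_succ_apply']

lemma aux_iter_fix (σ : C ≃+* C) (v : C) (hv : σ v = v) (k : ℕ) :
    (⇑σ)^[k] v = v := by
  induction k with
  | zero => rfl
  | succ k ih => rw [Function.iterate_succ_apply', ih, hv]

lemma aux_iter_symm (σ : C ≃+* C) (k : ℕ) (a : C) :
    (⇑σ.symm)^[k] ((⇑σ)^[k] a) = a := by
  induction k with
  | zero => rfl
  | succ k ih => rw [Function.iterate_succ_apply, Function.iterate_succ_apply',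
      σ.symm_apply_apply, ih]

lemma aux_rep_single (n : ℕ) (ι : C →+* R) (x : R)
    (rep : (Fin n → C) ≃+ R)
    (hrep : ∀ c : Fin n → C, rep c = ∑ i : Fin n, ι (c i) * x ^ (i : ℕ))
    (k : Fin n) : rep.symm (x ^ (k : ℕ)) = Pi.single k 1 := by
  have h : rep (Pi.single k 1) = x ^ (k : ℕ) := by
    rw [hrep, Finset.sum_eq_single k]
    · simp
    · intro i _ hi
      rw [Pi.single_eq_of_ne hi, map_zero, zero_mul]
    · simp
  rw [← h, rep.symm_apply_apply]

/-- the key computation: entries of the multiplication matrix -/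
lemma aux_key (σ : C ≃+* C) (n : ℕ) (hn : 0 < n)
    (u : Cˣ) (huσ : σ (u : C) = u)
    (ι : C →+* R) (x : R) (hx : ∀ a : C, x * ι a = ι (σ a) * x)
    (hxn : x ^ n = ι u)
    (rep : (Fin n → C) ≃+ R)
    (hrep : ∀ c : Fin n → C, rep c = ∑ i : Fin n, ι (c i) * x ^ (i : ℕ))
    (f : R) (M : Matrix (Fin n) (Fin n) C)
    (hM : ∀ g : R, rep.symm (g * f) = Matrix.vecMul (rep.symm g) M)
    (k j : Fin n) : M k j =
      if (k : ℕ) ≤ (j : ℕ) then (⇑σ)^[(k : ℕ)] (rep.symm f (j - k))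
      else (u : C) * (⇑σ)^[(k : ℕ)] (rep.symm f (j - k)) := by
  haveI : NeZero n := ⟨hn.ne'⟩
  set a : Fin n → C := rep.symm f with ha
  set c : Fin n → C := fun j => if (k : ℕ) ≤ (j : ℕ) then (⇑σ)^[(k : ℕ)] (a (j - k))
      else (u : C) * (⇑σ)^[(k : ℕ)] (a (j - k)) with hc
  have hMkj : M k j = rep.symm (x ^ (k : ℕ) * f) j := by
    rw [hM, aux_rep_single n ι x rep hrep k, Matrix.vecMul, dotProduct,
      Finset.sum_eq_single k]
    · simp
    · intro i _ hi
      rw [Pi.single_eq_of_ne hi, zero_mul]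
    · simp
  have hxkf : x ^ (k : ℕ) * f = rep c := by
    have hf : f = rep a := (rep.apply_symm_apply f).symm
    rw [hf, hrep, hrep, Finset.mul_sum]
    refine Fintype.sum_equiv (Equiv.addRight k) _ _ fun i => ?_
    simp only [Equiv.coe_addRight]
    have hi := i.isLt
    have hk := k.isLt
    have hik : i + k - k = i := add_sub_cancel_right i k
    have hm : ((i + k : Fin n) : ℕ) = ((i : ℕ) + (k : ℕ)) % n := Fin.val_add i k
    rw [← mul_assoc, aux_comm_pow σ ι x hx, mul_assoc, ← pow_add]
    simp only [hc, hik]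
    by_cases hw : (i : ℕ) + (k : ℕ) < n
    · have hm' : ((i + k : Fin n) : ℕ) = (i : ℕ) + (k : ℕ) := by
        rw [hm]; exact Nat.mod_eq_of_lt hw
      rw [if_pos (by omega), hm', Nat.add_comm (k : ℕ) (i : ℕ)]
    · have h1 : (i : ℕ) + (k : ℕ) = ((i : ℕ) + (k : ℕ) - n) + n := by omega
      have hm' : ((i + k : Fin n) : ℕ) = (i : ℕ) + (k : ℕ) - n := by
        rw [hm]
        conv_lhs => rw [h1]
        rw [Nat.add_mod_right]
        exact Nat.mod_eq_of_lt (by omega)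
      rw [if_neg (by omega), hm']
      have h2 : (k : ℕ) + (i : ℕ) = n + ((i : ℕ) + (k : ℕ) - n) := by omega
      rw [h2, pow_add, hxn, ← mul_assoc, ← _root_.map_mul,
        mul_comm ((⇑σ)^[(k : ℕ)] (a i)) (u : C)]
  rw [hMkj, hxkf, rep.symm_apply_apply]

end helpers

/-- With `ℛ = C[x;σ]/⟨x^n − u⟩`, `ℛ̂ = C[x;σ]/⟨x^n − u⁻¹⟩` and coordinate
maps given by the basis `1, x, …, x^{n-1}`, the anti-isomorphism
`Θ(Σ a_i x^i) = Σ σ^{-i}(a_i)x^{-i}` satisfies `M_{ℛ̂}(Θ f) = (M_ℛ f)ᵀ` for every `f`;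
and the matrix `M_ℛ(f)` of `f = Σ a_i x^i` has `(k,j)` entry `σ^k(a_{j-k})` if `j ≥ k`
and `u·σ^k(a_{n+j-k})` if `j < k` (here `j - k` is subtraction in `Fin n`,
i.e. modulo `n`). -/
theorem stmt12 {C R Rh : Type*} [CommRing C] [Ring R] [Ring Rh]
    (σ : C ≃+* C) (n : ℕ) (hn : 0 < n) (hσn : ∀ a : C, (⇑σ)^[n] a = a)
    (u : Cˣ) (huσ : σ (u : C) = u)
    (ι : C →+* R) (x : R) (hx : ∀ a : C, x * ι a = ι (σ a) * x)
    (hxn : x ^ n = ι u)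
    (rep : (Fin n → C) ≃+ R)
    (hrep : ∀ c : Fin n → C, rep c = ∑ i : Fin n, ι (c i) * x ^ (i : ℕ))
    (ι' : C →+* Rh) (x' : Rh) (hx' : ∀ a : C, x' * ι' a = ι' (σ a) * x')
    (hxn' : x' ^ n = ι' ((u⁻¹ : Cˣ) : C))
    (rep' : (Fin n → C) ≃+ Rh)
    (hrep' : ∀ c : Fin n → C, rep' c = ∑ i : Fin n, ι' (c i) * x' ^ (i : ℕ))
    (Θ : R → Rh)
    (hΘ : ∀ r : R, Θ r = ∑ i : Fin n,
      ι' ((⇑σ.symm)^[(i : ℕ)] (rep.symm r i)) * (ι' (u : C) * x' ^ (n - 1)) ^ (i : ℕ))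
    (f : R) (M Mh : Matrix (Fin n) (Fin n) C)
    (hM : ∀ g : R, rep.symm (g * f) = Matrix.vecMul (rep.symm g) M)
    (hMh : ∀ g : Rh, rep'.symm (g * Θ f) = Matrix.vecMul (rep'.symm g) Mh) :
    Mh = Mᵀ ∧
    ∀ k j : Fin n, M k j =
      if (k : ℕ) ≤ (j : ℕ) then (⇑σ)^[(k : ℕ)] (rep.symm f (j - k))
      else (u : C) * (⇑σ)^[(k : ℕ)] (rep.symm f (j - k)) := by
  haveI : NeZero n := ⟨hn.ne'⟩
  have part2 := aux_key σ n hn u huσ ι x hx hxn rep hrep f M hM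
  refine ⟨?_, part2⟩
  have huσ' : σ ((u⁻¹ : Cˣ) : C) = ((u⁻¹ : Cˣ) : C) := by
    have h1 : (u : C) * σ ((u⁻¹ : Cˣ) : C) = 1 := by
      rw [← huσ, ← _root_.map_mul, Units.mul_inv, _root_.map_one]
    calc σ ((u⁻¹ : Cˣ) : C) = ((u⁻¹ : Cˣ) : C) * ((u : C) * σ ((u⁻¹ : Cˣ) : C)) := by
          rw [← mul_assoc, Units.inv_mul, one_mul]
      _ = ((u⁻¹ : Cˣ) : C) := by rw [h1, mul_one]
  set a : Fin n → C := rep.symm f with ha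
  set y : Rh := ι' (u : C) * x' ^ (n - 1) with hy
  have hufix : ∀ m : ℕ, (⇑σ)^[m] (u : C) = u := aux_iter_fix σ _ huσ
  have hypow : ∀ i : ℕ, 1 ≤ i → i ≤ n → y ^ i = ι' (u : C) * x' ^ (n - i) := by
    intro i h1 h2
    induction i with
    | zero => omega
    | succ i ih =>
        rcases Nat.eq_or_lt_of_le h1 with h | h
        · rw [← h, pow_one, hy]
        · have hi1 : 1 ≤ i := by omega
          have hin : i ≤ n := by omega
          rw [pow_succ, ih hi1 hin, hy]
          calc ι' (u : C) * x' ^ (n - i) * (ι' (u : C) * x' ^ (n - 1))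
              = ι' (u : C) * ((x' ^ (n - i) * ι' (u : C)) * x' ^ (n - 1)) := by
                rw [mul_assoc, ← mul_assoc (x' ^ (n - i))]
            _ = ι' (u : C) * ((ι' (u : C) * x' ^ (n - i)) * x' ^ (n - 1)) := by
                rw [aux_comm_pow σ ι' x' hx', hufix]
            _ = ι' (u : C) * (ι' (u : C) * x' ^ ((n - i) + (n - 1))) := by
                rw [mul_assoc, ← pow_add]
            _ = ι' (u : C) * (ι' (u : C) * (ι' ((u⁻¹ : Cˣ) : C) * x' ^ (n - (i + 1)))) := by
                have he : (n - i) + (n - 1) = n + (n - (i + 1)) := by omega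
                rw [he, pow_add, hxn']
            _ = ι' (u : C) * x' ^ (n - (i + 1)) := by
                rw [← mul_assoc (ι' (u : C)) (ι' ((u⁻¹ : Cˣ) : C)), ← _root_.map_mul,
                  Units.mul_inv, _root_.map_one, one_mul]
  set b : Fin n → C := fun j => if (j : ℕ) = 0 then a 0
      else (u : C) * (⇑σ)^[(j : ℕ)] (a (-j)) with hb
  have hiter : ∀ (j' : ℕ), j' ≤ n → ∀ c : C, (⇑σ.symm)^[n - j'] c = (⇑σ)^[j'] c := by
    intro j' hj' c
    have h1 : (⇑σ)^[n] c = (⇑σ)^[n - j'] ((⇑σ)^[j'] c) := by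
      rw [← Function.iterate_add_apply]
      congr 1
      omega
    conv_lhs => rw [← hσn c, h1, aux_iter_symm]
  have hΘf : Θ f = rep' b := by
    rw [hΘ, hrep']
    refine (Fintype.sum_equiv (Equiv.neg (Fin n))
      (fun j => ι' (b j) * x' ^ (j : ℕ)) _ fun j => ?_).symm
    simp only [Equiv.neg_apply]
    by_cases hj : (j : ℕ) = 0
    · have hj0 : j = 0 := Fin.ext hj
      subst hj0
      simp [hb, ha]
    · have hjlt := j.isLt
      have hnegval : ((-j : Fin n) : ℕ) = n - (j : ℕ) := by
        rw [Fin.neg_def]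
        exact Nat.mod_eq_of_lt (by omega)
      rw [hnegval, hypow _ (by omega) (by omega)]
      have h3 : n - (n - (j : ℕ)) = (j : ℕ) := by omega
      rw [h3, hiter _ (by omega), ← mul_assoc, ← _root_.map_mul]
      simp only [hb]
      rw [if_neg hj, mul_comm ((⇑σ)^[(j : ℕ)] (a (-j))) (u : C)]
  have hbrep : rep'.symm (Θ f) = b := by rw [hΘf, rep'.symm_apply_apply]
  have keyh := aux_key σ n hn u⁻¹ huσ' ι' x' hx' hxn' rep' hrep' (Θ f) Mh hMh
  ext k j
  rw [Matrix.transpose_apply, keyh k j, hbrep, part2 j k, ha]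
  by_cases hkj : (k : ℕ) ≤ (j : ℕ)
  · rw [if_pos hkj]
    by_cases hjk : (j : ℕ) ≤ (k : ℕ)
    · have hkj' : k = j := Fin.ext (le_antisymm hkj hjk)
      subst hkj'
      rw [if_pos hjk, sub_self]
      simp [hb, ha]
    · rw [if_neg hjk]
      have hval : ((j - k : Fin n) : ℕ) = (j : ℕ) - (k : ℕ) := by
        have hk := k.isLt
        have hj := j.isLt
        rw [Fin.sub_def]
        show (n - (k : ℕ) + (j : ℕ)) % n = (j : ℕ) - (k : ℕ)
        have h1 : n - (k : ℕ) + (j : ℕ) = ((j : ℕ) - (k : ℕ)) + n := by omega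
        rw [h1, Nat.add_mod_right]
        exact Nat.mod_eq_of_lt (by omega)
      have hne : ((j - k : Fin n) : ℕ) ≠ 0 := by omega
      have hbjk : b (j - k) = (u : C) * (⇑σ)^[(j : ℕ) - (k : ℕ)] (a (k - j)) := by
        simp only [hb]
        rw [if_neg hne, hval, neg_sub]
      rw [hbjk, aux_iter_mul, hufix, ← Function.iterate_add_apply]
      have : (k : ℕ) + ((j : ℕ) - (k : ℕ)) = (j : ℕ) := by omega
      rw [this]
  · rw [if_neg hkj, if_pos (by omega : (j : ℕ) ≤ (k : ℕ))]
    have hval : ((j - k : Fin n) : ℕ) = n + (j : ℕ) - (k : ℕ) := by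
      have hk := k.isLt
      have hj := j.isLt
      rw [Fin.sub_def]
      show (n - (k : ℕ) + (j : ℕ)) % n = n + (j : ℕ) - (k : ℕ)
      rw [Nat.mod_eq_of_lt (by omega)]
      omega
    have hne : ((j - k : Fin n) : ℕ) ≠ 0 := by have := k.isLt; omega
    have hbjk : b (j - k) = (u : C) * (⇑σ)^[n + (j : ℕ) - (k : ℕ)] (a (k - j)) := by
      simp only [hb]
      rw [if_neg hne, hval, neg_sub]
    rw [hbjk, aux_iter_mul, hufix, ← Function.iterate_add_apply, ← mul_assoc,
      Units.inv_mul, one_mul]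
    have h4 : (k : ℕ) + (n + (j : ℕ) - (k : ℕ)) = (j : ℕ) + n := by
      have := k.isLt; omega
    rw [h4, Function.iterate_add_apply, hσn]
end

section
/- Let C be a commutative ring, σ an automorphism with σ^n = id, u a unit fixed by σ, and ℛ = C[x;σ]/⟨x^n − u⟩. Let f ∈ C[x;σ] be monic with x^n − u = f·h for some h. Then the right annihilator of the left ideal ℛf in ℛ is the right ideal hℛ. -/
section Aux

variable {C S : Type*} [CommRing C] [Ring S]
  (σ : C ≃+* C) (ι : C →+* S) (x : S)

lemma aux_xpow (hx : ∀ a : C, x * ι a = ι (σ a) * x) :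
    ∀ (k : ℕ) (a : C), x ^ k * ι a = ι ((⇑σ)^[k] a) * x ^ k := by
  intro k
  induction k with
  | zero => intro a; simp
  | succ k ih =>
    intro a
    rw [Function.iterate_succ_apply, pow_succ, mul_assoc, hx, ← mul_assoc, ih,
      mul_assoc, ← pow_succ]

lemma aux_mul (hx : ∀ a : C, x * ι a = ι (σ a) * x) (a b : C) (i j : ℕ) :
    (ι a * x ^ i) * (ι b * x ^ j) = ι (a * (⇑σ)^[i] b) * x ^ (i + j) := by
  rw [mul_assoc, ← mul_assoc (x ^ i), aux_xpow σ ι x hx, map_mul, pow_add]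
  rw [mul_assoc, mul_assoc]

lemma aux_single (rep : (ℕ →₀ C) ≃+ S)
    (hrep : ∀ p : ℕ →₀ C, rep p = ∑ k ∈ p.support, ι (p k) * x ^ k)
    (k : ℕ) (a : C) : rep (Finsupp.single k a) = ι a * x ^ k := by
  rcases eq_or_ne a 0 with rfl | ha
  · simp [hrep]
  · rw [hrep, Finsupp.support_single_ne_zero _ ha, Finset.sum_singleton,
      Finsupp.single_eq_same]

lemma aux_coeff (hx : ∀ a : C, x * ι a = ι (σ a) * x)
    (rep : (ℕ →₀ C) ≃+ S)
    (hrep : ∀ p : ℕ →₀ C, rep p = ∑ k ∈ p.support, ι (p k) * x ^ k)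
    (p q : S) (N : ℕ) :
    rep.symm (p * q) N =
      ∑ i ∈ (rep.symm p).support, ∑ j ∈ (rep.symm q).support,
        if i + j = N then (rep.symm p) i * (⇑σ)^[i] ((rep.symm q) j) else 0 := by
  classical
  have hp : p = ∑ i ∈ (rep.symm p).support, ι ((rep.symm p) i) * x ^ i := by
    conv_lhs => rw [← rep.apply_symm_apply p, hrep]
  have hq : q = ∑ j ∈ (rep.symm q).support, ι ((rep.symm q) j) * x ^ j := by
    conv_lhs => rw [← rep.apply_symm_apply q, hrep]
  have key : p * q = rep (∑ i ∈ (rep.symm p).support, ∑ j ∈ (rep.symm q).support,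
      Finsupp.single (i + j) ((rep.symm p) i * (⇑σ)^[i] ((rep.symm q) j))) := by
    rw [map_sum]
    conv_lhs => rw [hp, hq]
    rw [Finset.sum_mul]
    refine Finset.sum_congr rfl fun i _ => ?_
    rw [map_sum, Finset.mul_sum]
    refine Finset.sum_congr rfl fun j _ => ?_
    rw [aux_single ι x rep hrep, aux_mul σ ι x hx]
  rw [key, rep.symm_apply_apply, Finset.sum_apply']
  refine Finset.sum_congr rfl fun i _ => ?_
  rw [Finset.sum_apply']
  refine Finset.sum_congr rfl fun j _ => ?_
  rw [Finsupp.single_apply]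

lemma aux_cancel (hx : ∀ a : C, x * ι a = ι (σ a) * x)
    (rep : (ℕ →₀ C) ≃+ S)
    (hrep : ∀ p : ℕ →₀ C, rep p = ∑ k ∈ p.support, ι (p k) * x ^ k)
    (f : S) (hmonic : ∃ d : ℕ, rep.symm f d = 1 ∧ ∀ k, d < k → rep.symm f k = 0)
    (t : S) (hft : f * t = 0) : t = 0 := by
  classical
  by_cases hC : (1 : C) = 0
  · haveI : Subsingleton C := subsingleton_of_zero_eq_one hC.symm
    haveI : Subsingleton S := rep.toEquiv.symm.subsingleton
    exact Subsingleton.elim _ _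
  · by_contra ht
    obtain ⟨d, hd1, hd2⟩ := hmonic
    have htne : rep.symm t ≠ 0 := fun hh => ht (by
      have := congrArg rep hh
      rwa [rep.apply_symm_apply, map_zero] at this)
    have hsupp : (rep.symm t).support.Nonempty := by
      rw [Finsupp.support_nonempty_iff]; exact htne
    set D := (rep.symm t).support.max' hsupp with hD
    have hDmem : D ∈ (rep.symm t).support := Finset.max'_mem _ _
    have hdmem : d ∈ (rep.symm f).support := by
      rw [Finsupp.mem_support_iff, hd1]; exact fun hh => hC hh
    have hcoeff := aux_coeff σ ι x hx rep hrep f t (d + D)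
    rw [hft, map_zero, Finsupp.coe_zero, Pi.zero_apply] at hcoeff
    have hval : (∑ i ∈ (rep.symm f).support, ∑ j ∈ (rep.symm t).support,
        if i + j = d + D then (rep.symm f) i * (⇑σ)^[i] ((rep.symm t) j) else 0)
        = (⇑σ)^[d] ((rep.symm t) D) := by
      rw [Finset.sum_eq_single d]
      · rw [Finset.sum_eq_single D]
        · rw [if_pos rfl, hd1, one_mul]
        · intro j hj hne
          have hjD : j ≤ D := Finset.le_max' _ _ hj
          rw [if_neg (by omega)]
        · intro hD'; exact absurd hDmem hD'
      · intro i hi hne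
        refine Finset.sum_eq_zero fun j hj => ?_
        have hjD : j ≤ D := Finset.le_max' _ _ hj
        have hid : i ≤ d := by
          by_contra hh
          exact (Finsupp.mem_support_iff.mp hi) (hd2 i (by omega))
        rw [if_neg (by omega)]
      · intro hd'; exact absurd hdmem hd'
    rw [hval] at hcoeff
    have hinj : Function.Injective ((⇑σ)^[d]) := Function.Injective.iterate σ.injective d
    have : (rep.symm t) D = 0 := by
      apply hinj
      rw [Function.iterate_fixed (map_zero σ) d]
      exact hcoeff.symm ▸ hcoeff
    exact (Finsupp.mem_support_iff.mp hDmem) this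

end Aux

/-- Let `C` be commutative, `σ` an automorphism with `σ^n = id`, `u` a
unit fixed by `σ`, and `ℛ = C[x;σ]/⟨x^n − u⟩` (realized as a `RingQuot` of the abstract
skew polynomial ring `S = C[x;σ]`). If `f ∈ S` is monic with `x^n − u = f·h`, then the
right annihilator of the left ideal `ℛf̄` in `ℛ` is the right ideal `h̄ℛ`. -/
theorem stmt13 {C S : Type*} [CommRing C] [Ring S]
    (σ : C ≃+* C) (n : ℕ) (hn : 0 < n) (hσn : ∀ a : C, (⇑σ)^[n] a = a)
    (u : Cˣ) (huσ : σ (u : C) = u)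
    (ι : C →+* S) (x : S) (hx : ∀ a : C, x * ι a = ι (σ a) * x)
    (rep : (ℕ →₀ C) ≃+ S)
    (hrep : ∀ p : ℕ →₀ C, rep p = ∑ k ∈ p.support, ι (p k) * x ^ k)
    (f h : S)
    (hmonic : ∃ d : ℕ, rep.symm f d = 1 ∧ ∀ k, d < k → rep.symm f k = 0)
    (hfh : x ^ n - ι u = f * h) :
    {s : RingQuot (fun a b : S => a = x ^ n - ι u ∧ b = 0) |
        ∀ g : RingQuot (fun a b : S => a = x ^ n - ι u ∧ b = 0),
          g * RingQuot.mkRingHom (fun a b : S => a = x ^ n - ι u ∧ b = 0) f * s = 0}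
      = {s : RingQuot (fun a b : S => a = x ^ n - ι u ∧ b = 0) |
          ∃ r : RingQuot (fun a b : S => a = x ^ n - ι u ∧ b = 0),
            s = RingQuot.mkRingHom (fun a b : S => a = x ^ n - ι u ∧ b = 0) h * r} := by
  classical
  set R : S → S → Prop := fun a b : S => a = x ^ n - ι u ∧ b = 0 with hRdef
  set z : S := x ^ n - ι u with hz
  set mk : S →+* RingQuot R := RingQuot.mkRingHom R with hmk
  -- z is central
  have hcom : ∀ s : S, Commute z s := by
    have c1 : ∀ a : C, Commute z (ι a) := by
      intro a
      have : z * ι a = ι a * z := by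
        rw [hz, sub_mul, mul_sub, aux_xpow σ ι x hx n a, hσn a, ← map_mul, ← map_mul,
          mul_comm a (u : C)]
      exact this
    have c2 : Commute z x := by
      have : z * x = x * z := by
        rw [hz, sub_mul, mul_sub, ← pow_succ, ← pow_succ', hx, huσ]
      exact this
    intro s
    have : s = rep (rep.symm s) := (rep.apply_symm_apply s).symm
    rw [this, hrep]
    exact Commute.sum_right _ _ _ fun k _ => (c1 _).mul_right ((c2).pow_right k)
  -- membership characterization: mk a = 0 → ∃ w, a = z * w
  have hchar : ∀ a : S, mk a = 0 → ∃ w : S, a = z * w := by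
    intro a ha
    let con : RingCon S :=
      { r := fun a b => ∃ w, a - b = z * w
        iseqv := by
          constructor
          · intro a; exact ⟨0, by simp⟩
          · rintro a b ⟨w, hw⟩
            exact ⟨-w, by rw [mul_neg, ← hw]; abel⟩
          · rintro a b c ⟨w1, h1⟩ ⟨w2, h2⟩
            exact ⟨w1 + w2, by rw [mul_add, ← h1, ← h2]; abel⟩
        mul' := by
          rintro a b c d ⟨w1, h1⟩ ⟨w2, h2⟩
          refine ⟨w1 * c + b * w2, ?_⟩
          have hbd : a * c - b * d = (a - b) * c + b * (c - d) := by noncomm_ring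
          rw [hbd, h1, h2, mul_add, mul_assoc z w1 c]
          congr 1
          rw [← mul_assoc b z w2, ← (hcom b).eq, mul_assoc]
        add' := by
          rintro a b c d ⟨w1, h1⟩ ⟨w2, h2⟩
          exact ⟨w1 + w2, by rw [mul_add, ← h1, ← h2]; abel⟩ }
    have φrel : ∀ ⦃p q : S⦄, R p q → con.mk' p = con.mk' q := by
      rintro p q ⟨hp, hq⟩
      subst hp; subst hq
      exact (RingCon.eq con).mpr ⟨1, by simp; rfl⟩
    have := congrArg (RingQuot.lift ⟨con.mk', φrel⟩) ha
    rw [RingQuot.lift_mkRingHom_apply, map_zero] at this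
    have h0 : con.mk' a = con.mk' 0 := by rw [this, map_zero]
    obtain ⟨w, hw⟩ := (RingCon.eq con).mp h0
    exact ⟨w, by rwa [sub_zero] at hw⟩
  have hz0 : mk z = 0 := by
    have := RingQuot.mkRingHom_rel (r := R) (x := z) (y := 0) ⟨rfl, rfl⟩
    rwa [map_zero] at this
  ext s
  simp only [Set.mem_setOf_eq]
  constructor
  · intro hs
    obtain ⟨t, rfl⟩ := RingQuot.mkRingHom_surjective R s
    have h1 := hs 1
    rw [one_mul] at h1
    have h2 : mk (f * t) = 0 := by rw [map_mul]; exact h1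
    obtain ⟨w, hw⟩ := hchar _ h2
    have h3 : f * (t - h * w) = 0 := by
      rw [mul_sub, hw, hfh, mul_assoc, sub_self]
    have h4 : t - h * w = 0 := aux_cancel σ ι x hx rep hrep f hmonic _ h3
    refine ⟨mk w, ?_⟩
    rw [← map_mul]
    congr 1
    rw [← sub_eq_zero]
    exact h4
  · rintro ⟨r', rfl⟩ g
    have : mk f * (mk h * r') = 0 := by
      rw [← mul_assoc, ← map_mul, ← hfh, hz0, zero_mul]
    rw [mul_assoc, this, mul_zero]
end

section
/- Let C be a commutative ring, σ an automorphism with σ^n = id, u a unit fixed by σ, and suppose x^n − u = f·h in C[x;σ] with f monic. If 𝒞 = 𝔳(ℛf) is the (u,σ)-constacyclic code generated by f, then 𝒞^⊥ = 𝔳̂(ℛ̂·Θ(h)); in particular the dual of a (u,σ)-constacyclic code of this form is (u^{-1},σ)-constacyclic. -/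
open Matrix

namespace Stmt14Aux

variable {C A : Type*} [CommRing C] [Ring A]

lemma it_add (τ : C ≃+* C) (k : ℕ) (a b : C) :
    (⇑τ)^[k] (a + b) = (⇑τ)^[k] a + (⇑τ)^[k] b := by
  induction k generalizing a b with
  | zero => rfl
  | succ k ih => simp only [Function.iterate_succ_apply, map_add, ih]

lemma it_mul (τ : C ≃+* C) (k : ℕ) (a b : C) :
    (⇑τ)^[k] (a * b) = (⇑τ)^[k] a * (⇑τ)^[k] b := by
  induction k generalizing a b with
  | zero => rfl
  | succ k ih => simp only [Function.iterate_succ_apply, _root_.map_mul, ih]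

lemma it_zero (τ : C ≃+* C) (k : ℕ) : (⇑τ)^[k] (0 : C) = 0 :=
  Function.iterate_fixed (map_zero τ) k

lemma it_fixed (τ : C ≃+* C) {c : C} (h : τ c = c) (k : ℕ) : (⇑τ)^[k] c = c :=
  Function.iterate_fixed h k

lemma it_cancel (τ : C ≃+* C) (k : ℕ) (a : C) : (⇑τ)^[k] ((⇑τ.symm)^[k] a) = a := by
  induction k generalizing a with
  | zero => rfl
  | succ k ih =>
    rw [Function.iterate_succ_apply (⇑τ), Function.iterate_succ_apply' (⇑τ.symm),
      RingEquiv.apply_symm_apply]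
    exact ih a

lemma it_cancel' (τ : C ≃+* C) (k : ℕ) (a : C) : (⇑τ.symm)^[k] ((⇑τ)^[k] a) = a := by
  have h := it_cancel τ.symm k a
  simpa using h

lemma it_symm_n (σ : C ≃+* C) (n : ℕ) (hσn : ∀ a : C, (⇑σ)^[n] a = a) (a : C) :
    (⇑σ.symm)^[n] a = a := by
  have h1 := it_cancel σ n a
  rw [hσn] at h1
  exact h1

lemma symm_fix (σ : C ≃+* C) {c : C} (h : σ c = c) : σ.symm c = c := by
  conv_lhs => rw [← h, RingEquiv.symm_apply_apply]

lemma unit_inv_fix (σ : C ≃+* C) (v : Cˣ) (h : σ (v : C) = v) :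
    σ ((↑v⁻¹ : C)) = ↑v⁻¹ := by
  have h2 : σ ((↑v⁻¹ : C) * ↑v) = 1 := by rw [Units.inv_mul, _root_.map_one]
  rw [_root_.map_mul, h] at h2
  calc σ (↑v⁻¹ : C) = σ (↑v⁻¹ : C) * ((↑v : C) * ↑v⁻¹) := by rw [Units.mul_inv, mul_one]
  _ = (σ (↑v⁻¹ : C) * ↑v) * ↑v⁻¹ := by ring
  _ = ↑v⁻¹ := by rw [h2, one_mul]

lemma powc (σ : C ≃+* C) (ι : C →+* A) (x : A)
    (hx : ∀ a : C, x * ι a = ι (σ a) * x) (k : ℕ) (a : C) :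
    x ^ k * ι a = ι ((⇑σ)^[k] a) * x ^ k := by
  induction k generalizing a with
  | zero => simp
  | succ k ih =>
    rw [pow_succ, mul_assoc, hx, ← mul_assoc, ih, Function.iterate_succ_apply,
      mul_assoc]



section Skew
variable (σ : C ≃+* C) (n : ℕ) (v : Cˣ) (ι : C →+* A) (x : A)

lemma xz (hn : 0 < n) (hvσ : σ (v : C) = v)
    (hx : ∀ a : C, x * ι a = ι (σ a) * x) (hxn : x ^ n = ι (v : C)) :
    x * (ι (↑v⁻¹ : C) * x ^ (n - 1)) = 1 := by
  rw [← mul_assoc, hx, unit_inv_fix σ v hvσ, mul_assoc, ← pow_succ',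
    Nat.sub_add_cancel hn, hxn, ← _root_.map_mul, Units.inv_mul, _root_.map_one]

lemma zx (hn : 0 < n) (hxn : x ^ n = ι (v : C)) :
    (ι (↑v⁻¹ : C) * x ^ (n - 1)) * x = 1 := by
  rw [mul_assoc, ← pow_succ, Nat.sub_add_cancel hn, hxn, ← _root_.map_mul,
    Units.inv_mul, _root_.map_one]

lemma zpow_xpow (hn : 0 < n) (hxn : x ^ n = ι (v : C)) (m : ℕ) :
    (ι (↑v⁻¹ : C) * x ^ (n - 1)) ^ m * x ^ m = 1 := by
  set z := ι (↑v⁻¹ : C) * x ^ (n - 1) with hz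
  induction m with
  | zero => simp
  | succ m ih =>
    calc z ^ (m + 1) * x ^ (m + 1) = z ^ m * (z * x * x ^ m) := by
          rw [pow_succ, pow_succ']
          conv_rhs => rw [mul_assoc z x]
          rw [mul_assoc]
    _ = z ^ m * x ^ m := by rw [zx n v ι x hn hxn, one_mul]
    _ = 1 := ih

lemma xpow_zpow (hn : 0 < n) (hvσ : σ (v : C) = v)
    (hx : ∀ a : C, x * ι a = ι (σ a) * x) (hxn : x ^ n = ι (v : C)) (m : ℕ) :
    x ^ m * (ι (↑v⁻¹ : C) * x ^ (n - 1)) ^ m = 1 := by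
  set z := ι (↑v⁻¹ : C) * x ^ (n - 1) with hz
  induction m with
  | zero => simp
  | succ m ih =>
    calc x ^ (m + 1) * z ^ (m + 1) = x ^ m * (x * z * z ^ m) := by
          rw [pow_succ x, pow_succ' z]
          conv_rhs => rw [mul_assoc x z]
          rw [mul_assoc]
    _ = x ^ m * z ^ m := by rw [xz σ n v ι x hn hvσ hx hxn, one_mul]
    _ = 1 := ih

lemma zpow_eq (hn : 0 < n) (hσn : ∀ a : C, (⇑σ)^[n] a = a) (hvσ : σ (v : C) = v)
    (hx : ∀ a : C, x * ι a = ι (σ a) * x) (hxn : x ^ n = ι (v : C))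
    (m : ℕ) (hm : m ≤ n) :
    (ι (↑v⁻¹ : C) * x ^ (n - 1)) ^ m = ι (↑v⁻¹ : C) * x ^ (n - m) := by
  set z := ι (↑v⁻¹ : C) * x ^ (n - 1) with hz
  have h1 : x ^ m * (ι (↑v⁻¹ : C) * x ^ (n - m)) = 1 := by
    rw [← mul_assoc, powc σ ι x hx m, it_fixed σ (unit_inv_fix σ v hvσ) m,
      mul_assoc, ← pow_add, Nat.add_sub_cancel' hm, hxn, ← _root_.map_mul,
      Units.inv_mul, _root_.map_one]
  calc z ^ m = z ^ m * (x ^ m * (ι (↑v⁻¹ : C) * x ^ (n - m))) := by rw [h1, mul_one]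
  _ = (z ^ m * x ^ m) * (ι (↑v⁻¹ : C) * x ^ (n - m)) := by rw [mul_assoc]
  _ = ι (↑v⁻¹ : C) * x ^ (n - m) := by
      rw [zpow_xpow n v ι x hn hxn m, one_mul]

lemma z_comm (hn : 0 < n) (hσn : ∀ a : C, (⇑σ)^[n] a = a)
    (hx : ∀ a : C, x * ι a = ι (σ a) * x) (a : C) :
    (ι (↑v⁻¹ : C) * x ^ (n - 1)) * ι a = ι (σ.symm a) * (ι (↑v⁻¹ : C) * x ^ (n - 1)) := by
  have h2 : (⇑σ)^[n - 1] a = σ.symm a := by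
    have hn1 : n - 1 + 1 = n := Nat.sub_add_cancel hn
    have h3 : σ ((⇑σ)^[n - 1] a) = a := by
      have h4 := hσn a
      rw [← hn1, Function.iterate_succ_apply'] at h4
      exact h4
    apply σ.injective
    rw [RingEquiv.apply_symm_apply]
    exact h3
  rw [mul_assoc, powc σ ι x hx (n - 1) a, h2, ← mul_assoc, ← _root_.map_mul,
    mul_comm ((↑v⁻¹ : C)) (σ.symm a), _root_.map_mul, mul_assoc]

lemma zpow_comm (hn : 0 < n) (hσn : ∀ a : C, (⇑σ)^[n] a = a)
    (hx : ∀ a : C, x * ι a = ι (σ a) * x) (k : ℕ) (a : C) :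
    (ι (↑v⁻¹ : C) * x ^ (n - 1)) ^ k * ι a
      = ι ((⇑σ.symm)^[k] a) * (ι (↑v⁻¹ : C) * x ^ (n - 1)) ^ k :=
  powc σ.symm ι (ι (↑v⁻¹ : C) * x ^ (n - 1)) (z_comm σ n v ι x hn hσn hx) k a

end Skew

section Coords
variable (σ : C ≃+* C) (n : ℕ) (v : Cˣ) (ι : C →+* A) (x : A)
variable (rep : (Fin n → C) ≃+ A)

lemma rep_single (hrep : ∀ c : Fin n → C, rep c = ∑ i : Fin n, ι (c i) * x ^ (i : ℕ))
    (k : ℕ) (hk : k < n) (a : C) :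
    rep (Pi.single (⟨k, hk⟩ : Fin n) a) = ι a * x ^ k := by
  rw [hrep, Finset.sum_eq_single (⟨k, hk⟩ : Fin n)]
  · rw [Pi.single_eq_same]
  · intro i _ hi
    rw [Pi.single_eq_of_ne hi, map_zero, zero_mul]
  · intro habs; exact absurd (Finset.mem_univ _) habs

lemma coeff_mono (hrep : ∀ c : Fin n → C, rep c = ∑ i : Fin n, ι (c i) * x ^ (i : ℕ))
    (k : ℕ) (hk : k < n) (a : C) :
    rep.symm (ι a * x ^ k) = Pi.single (⟨k, hk⟩ : Fin n) a := by
  rw [← rep_single n ι x rep hrep k hk a]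
  exact rep.symm_apply_apply _

lemma expand (hrep : ∀ c : Fin n → C, rep c = ∑ i : Fin n, ι (c i) * x ^ (i : ℕ))
    (r : A) : r = ∑ i : Fin n, ι (rep.symm r i) * x ^ (i : ℕ) := by
  conv_lhs => rw [← rep.apply_symm_apply r]
  exact hrep _

lemma coeff0_xj_zi (hn : 0 < n) (hσn : ∀ a : C, (⇑σ)^[n] a = a) (hvσ : σ (v : C) = v)
    (hx : ∀ a : C, x * ι a = ι (σ a) * x) (hxn : x ^ n = ι (v : C))
    (hrep : ∀ c : Fin n → C, rep c = ∑ i : Fin n, ι (c i) * x ^ (i : ℕ))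
    (a : C) (j i : ℕ) (hj : j < n) (hi : i < n) :
    rep.symm (ι a * (x ^ j * (ι (↑v⁻¹ : C) * x ^ (n - 1)) ^ i)) ⟨0, hn⟩
      = if i = j then a else 0 := by
  rcases le_or_gt i j with hij | hij
  · have hxj : x ^ j = x ^ (j - i) * x ^ i := by rw [← pow_add, Nat.sub_add_cancel hij]
    rw [hxj, mul_assoc, xpow_zpow σ n v ι x hn hvσ hx hxn i, mul_one,
      coeff_mono n ι x rep hrep (j - i) (by omega) a, Pi.single_apply]
    simp only [Fin.mk.injEq]
    split_ifs with h1 h2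
    · rfl
    · exact (h2 (by omega)).elim
    · exact (h1 (by omega)).elim
    · rfl
  · have hzi : (ι (↑v⁻¹ : C) * x ^ (n - 1)) ^ i
        = (ι (↑v⁻¹ : C) * x ^ (n - 1)) ^ j * (ι (↑v⁻¹ : C) * x ^ (n - 1)) ^ (i - j) := by
      rw [← pow_add, Nat.add_sub_cancel' (le_of_lt hij)]
    rw [hzi, ← mul_assoc (x ^ j), xpow_zpow σ n v ι x hn hvσ hx hxn j,
      one_mul, zpow_eq σ n v ι x hn hσn hvσ hx hxn (i - j) (by omega), ← mul_assoc,
      ← _root_.map_mul, coeff_mono n ι x rep hrep (n - (i - j)) (by omega) _,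
      Pi.single_apply]
    simp only [Fin.mk.injEq]
    rw [if_neg (by omega), if_neg (by omega)]

lemma coeff0_zj_xk (hn : 0 < n) (hσn : ∀ a : C, (⇑σ)^[n] a = a) (hvσ : σ (v : C) = v)
    (hx : ∀ a : C, x * ι a = ι (σ a) * x) (hxn : x ^ n = ι (v : C))
    (hrep : ∀ c : Fin n → C, rep c = ∑ i : Fin n, ι (c i) * x ^ (i : ℕ))
    (a : C) (j k : ℕ) (hj : j < n) (hk : k < n) :
    rep.symm (ι a * ((ι (↑v⁻¹ : C) * x ^ (n - 1)) ^ j * x ^ k)) ⟨0, hn⟩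
      = if j = k then a else 0 := by
  rcases le_or_gt j k with hjk | hjk
  · have hxk : x ^ k = x ^ j * x ^ (k - j) := by rw [← pow_add, Nat.add_sub_cancel' hjk]
    rw [hxk, ← mul_assoc ((ι (↑v⁻¹ : C) * x ^ (n - 1)) ^ j), zpow_xpow n v ι x hn hxn j,
      one_mul, coeff_mono n ι x rep hrep (k - j) (by omega) a, Pi.single_apply]
    simp only [Fin.mk.injEq]
    split_ifs with h1 h2
    · rfl
    · exact (h2 (by omega)).elim
    · exact (h1 (by omega)).elim
    · rfl
  · have hzj : (ι (↑v⁻¹ : C) * x ^ (n - 1)) ^ j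
        = (ι (↑v⁻¹ : C) * x ^ (n - 1)) ^ (j - k) * (ι (↑v⁻¹ : C) * x ^ (n - 1)) ^ k := by
      rw [← pow_add, Nat.sub_add_cancel (le_of_lt hjk)]
    rw [hzj, mul_assoc ((ι (↑v⁻¹ : C) * x ^ (n - 1)) ^ (j - k)), zpow_xpow n v ι x hn hxn k,
      mul_one, zpow_eq σ n v ι x hn hσn hvσ hx hxn (j - k) (by omega), ← mul_assoc,
      ← _root_.map_mul, coeff_mono n ι x rep hrep (n - (j - k)) (by omega) _,
      Pi.single_apply]
    simp only [Fin.mk.injEq]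
    rw [if_neg (by omega), if_neg (by omega)]

end Coords

section Dot
variable (σ : C ≃+* C) (n : ℕ) (v : Cˣ) (ι : C →+* A) (x : A)
variable (rep : (Fin n → C) ≃+ A)

lemma mono_mul (hx : ∀ a : C, x * ι a = ι (σ a) * x) (a b : C) (j : ℕ) (y : A) :
    (ι a * x ^ j) * (ι b * y) = ι (a * (⇑σ)^[j] b) * (x ^ j * y) := by
  rw [mul_assoc, ← mul_assoc (x ^ j), powc σ ι x hx j b, mul_assoc, ← mul_assoc,
    ← _root_.map_mul]

lemma dot_eq (hn : 0 < n) (hσn : ∀ a : C, (⇑σ)^[n] a = a) (hvσ : σ (v : C) = v)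
    (hx : ∀ a : C, x * ι a = ι (σ a) * x) (hxn : x ^ n = ι (v : C))
    (hrep : ∀ c : Fin n → C, rep c = ∑ i : Fin n, ι (c i) * x ^ (i : ℕ))
    (w : Fin n → C) (r : A) :
    dotProduct w (rep.symm r)
      = rep.symm (r * ∑ i : Fin n,
          ι ((⇑σ.symm)^[(i : ℕ)] (w i)) * (ι (↑v⁻¹ : C) * x ^ (n - 1)) ^ (i : ℕ)) ⟨0, hn⟩ := by
  obtain ⟨c, rfl⟩ : ∃ c, r = rep c := ⟨rep.symm r, (rep.apply_symm_apply r).symm⟩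
  rw [rep.symm_apply_apply]
  conv_rhs => rw [hrep c, Finset.sum_mul_sum]
  have hterm : ∀ j i : Fin n,
      (ι (c j) * x ^ (j : ℕ)) * (ι ((⇑σ.symm)^[(i : ℕ)] (w i))
        * (ι (↑v⁻¹ : C) * x ^ (n - 1)) ^ (i : ℕ))
      = ι (c j * (⇑σ)^[(j : ℕ)] ((⇑σ.symm)^[(i : ℕ)] (w i)))
        * (x ^ (j : ℕ) * (ι (↑v⁻¹ : C) * x ^ (n - 1)) ^ (i : ℕ)) := fun j i =>
    mono_mul σ ι x hx _ _ _ _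
  simp only [hterm, map_sum, Finset.sum_apply]
  have hsum : ∀ j i : Fin n,
      rep.symm (ι (c j * (⇑σ)^[(j : ℕ)] ((⇑σ.symm)^[(i : ℕ)] (w i)))
        * (x ^ (j : ℕ) * (ι (↑v⁻¹ : C) * x ^ (n - 1)) ^ (i : ℕ))) ⟨0, hn⟩
      = if (i : ℕ) = (j : ℕ) then c j * (⇑σ)^[(j : ℕ)] ((⇑σ.symm)^[(i : ℕ)] (w i)) else 0 :=
    fun j i => coeff0_xj_zi σ n v ι x rep hn hσn hvσ hx hxn hrep _ (j : ℕ) (i : ℕ) j.isLt i.isLt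
  simp only [hsum]
  simp only [Fin.val_eq_val, Finset.sum_ite_eq', Finset.mem_univ, if_true, it_cancel σ]
  simp [dotProduct, mul_comm]

lemma eq_zero_of_coeff0 (hn : 0 < n) (hσn : ∀ a : C, (⇑σ)^[n] a = a) (hvσ : σ (v : C) = v)
    (hx : ∀ a : C, x * ι a = ι (σ a) * x) (hxn : x ^ n = ι (v : C))
    (hrep : ∀ c : Fin n → C, rep c = ∑ i : Fin n, ι (c i) * x ^ (i : ℕ))
    (s : A) (h0 : ∀ g : A, rep.symm (g * s) ⟨0, hn⟩ = 0) : s = 0 := by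
  have hc : ∀ j : Fin n, rep.symm s j = 0 := by
    intro j
    have h1 := h0 ((ι (↑v⁻¹ : C) * x ^ (n - 1)) ^ (j : ℕ))
    have h2 : (ι (↑v⁻¹ : C) * x ^ (n - 1)) ^ (j : ℕ) * s
        = ∑ k : Fin n, ι ((⇑σ.symm)^[(j : ℕ)] (rep.symm s k))
            * ((ι (↑v⁻¹ : C) * x ^ (n - 1)) ^ (j : ℕ) * x ^ (k : ℕ)) := by
      conv_lhs => rw [expand n ι x rep hrep s, Finset.mul_sum]
      refine Finset.sum_congr rfl fun k _ => ?_
      rw [← mul_assoc, zpow_comm σ n v ι x hn hσn hx (j : ℕ) (rep.symm s k), mul_assoc]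
    rw [h2] at h1
    simp only [map_sum, Finset.sum_apply] at h1
    have hsum : ∀ k : Fin n,
        rep.symm (ι ((⇑σ.symm)^[(j : ℕ)] (rep.symm s k))
          * ((ι (↑v⁻¹ : C) * x ^ (n - 1)) ^ (j : ℕ) * x ^ (k : ℕ))) ⟨0, hn⟩
        = if (j : ℕ) = (k : ℕ) then (⇑σ.symm)^[(j : ℕ)] (rep.symm s k) else 0 :=
      fun k => coeff0_zj_xk σ n v ι x rep hn hσn hvσ hx hxn hrep _ (j : ℕ) (k : ℕ) j.isLt k.isLt
    simp only [hsum] at h1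
    simp only [Fin.val_eq_val, Finset.sum_ite_eq, Finset.mem_univ, if_true] at h1
    have h3 := congrArg ((⇑σ)^[(j : ℕ)]) h1
    rw [it_cancel σ, it_zero σ] at h3
    exact h3
  have h4 : rep.symm s = 0 := funext hc
  have h5 := congrArg rep h4
  rw [rep.apply_symm_apply, map_zero] at h5
  exact h5

lemma mem_iff (hn : 0 < n) (hσn : ∀ a : C, (⇑σ)^[n] a = a) (hvσ : σ (v : C) = v)
    (hx : ∀ a : C, x * ι a = ι (σ a) * x) (hxn : x ^ n = ι (v : C))
    (hrep : ∀ c : Fin n → C, rep c = ∑ i : Fin n, ι (c i) * x ^ (i : ℕ))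
    (w : Fin n → C) (t : A) :
    (∀ g : A, dotProduct w (rep.symm (g * t)) = 0)
      ↔ t * (∑ i : Fin n,
          ι ((⇑σ.symm)^[(i : ℕ)] (w i)) * (ι (↑v⁻¹ : C) * x ^ (n - 1)) ^ (i : ℕ)) = 0 := by
  constructor
  · intro hg
    apply eq_zero_of_coeff0 σ n v ι x rep hn hσn hvσ hx hxn hrep
    intro g
    rw [← mul_assoc, ← dot_eq σ n v ι x rep hn hσn hvσ hx hxn hrep w (g * t)]
    exact hg g
  · intro h0 g
    rw [dot_eq σ n v ι x rep hn hσn hvσ hx hxn hrep w (g * t), mul_assoc, h0, mul_zero,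
      map_zero]
    rfl

end Dot

section Theta
variable {A' : Type*} [Ring A']
variable (σ : C ≃+* C) (n : ℕ) (v w : Cˣ)
variable (ι : C →+* A) (x : A) (rep : (Fin n → C) ≃+ A)
variable (ι' : C →+* A') (x' : A') (rep' : (Fin n → C) ≃+ A')

lemma theta_add (Θ : A → A')
    (hΘ : ∀ r : A, Θ r = ∑ i : Fin n,
      ι' ((⇑σ.symm)^[(i : ℕ)] (rep.symm r i)) * (ι' ((↑w⁻¹ : C)) * x' ^ (n - 1)) ^ (i : ℕ))
    (r s : A) : Θ (r + s) = Θ r + Θ s := by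
  simp only [hΘ, map_add, Pi.add_apply, it_add σ.symm, add_mul, Finset.sum_add_distrib]

lemma theta_sum (Θ : A → A')
    (hΘ : ∀ r : A, Θ r = ∑ i : Fin n,
      ι' ((⇑σ.symm)^[(i : ℕ)] (rep.symm r i)) * (ι' ((↑w⁻¹ : C)) * x' ^ (n - 1)) ^ (i : ℕ))
    {β : Type*} (t : Finset β) (F : β → A) :
    Θ (∑ b ∈ t, F b) = ∑ b ∈ t, Θ (F b) :=
  map_sum (AddMonoidHom.mk' Θ (theta_add σ n w rep ι' x' Θ hΘ)) F t

lemma theta_mono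
    (hrep : ∀ c : Fin n → C, rep c = ∑ i : Fin n, ι (c i) * x ^ (i : ℕ))
    (Θ : A → A')
    (hΘ : ∀ r : A, Θ r = ∑ i : Fin n,
      ι' ((⇑σ.symm)^[(i : ℕ)] (rep.symm r i)) * (ι' ((↑w⁻¹ : C)) * x' ^ (n - 1)) ^ (i : ℕ))
    (k : ℕ) (hk : k < n) (a : C) :
    Θ (ι a * x ^ k) = ι' ((⇑σ.symm)^[k] a) * (ι' ((↑w⁻¹ : C)) * x' ^ (n - 1)) ^ k := by
  rw [hΘ, coeff_mono n ι x rep hrep k hk a, Finset.sum_eq_single (⟨k, hk⟩ : Fin n)]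
  · rw [Pi.single_eq_same]
  · intro i _ hi
    rw [Pi.single_eq_of_ne hi, it_zero σ.symm, map_zero, zero_mul]
  · intro habs; exact absurd (Finset.mem_univ _) habs

lemma theta_antimul (hn : 0 < n) (hσn : ∀ a : C, (⇑σ)^[n] a = a)
    (hvσ : σ (v : C) = v) (hw : w = v⁻¹)
    (hx : ∀ a : C, x * ι a = ι (σ a) * x) (hxn : x ^ n = ι (v : C))
    (hrep : ∀ c : Fin n → C, rep c = ∑ i : Fin n, ι (c i) * x ^ (i : ℕ))
    (hx' : ∀ a : C, x' * ι' a = ι' (σ a) * x') (hxn' : x' ^ n = ι' ((w : Cˣ) : C))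
    (Θ : A → A')
    (hΘ : ∀ r : A, Θ r = ∑ i : Fin n,
      ι' ((⇑σ.symm)^[(i : ℕ)] (rep.symm r i)) * (ι' ((↑w⁻¹ : C)) * x' ^ (n - 1)) ^ (i : ℕ))
    (r s : A) : Θ (r * s) = Θ s * Θ r := by
  have hwv : ((↑w⁻¹ : Cˣ) : C) = ↑v := by rw [hw, inv_inv]
  have hwσ : σ ((w : Cˣ) : C) = ↑w := by rw [hw]; exact unit_inv_fix σ v hvσ
  have hvsymm : σ.symm ((v : Cˣ) : C) = ↑v := symm_fix σ hvσ
  have key : ∀ (j i : Fin n) (a b : C),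
      Θ ((ι a * x ^ (j : ℕ)) * (ι b * x ^ (i : ℕ)))
        = Θ (ι b * x ^ (i : ℕ)) * Θ (ι a * x ^ (j : ℕ)) := by
    intro j i a b
    have hm : (ι a * x ^ (j : ℕ)) * (ι b * x ^ (i : ℕ))
        = ι (a * (⇑σ)^[(j : ℕ)] b) * x ^ ((j : ℕ) + (i : ℕ)) := by
      rw [mono_mul σ ι x hx, ← pow_add]
    rw [theta_mono σ n w ι x rep ι' x' hrep Θ hΘ (i : ℕ) i.isLt b,
      theta_mono σ n w ι x rep ι' x' hrep Θ hΘ (j : ℕ) j.isLt a,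
      mono_mul σ.symm ι' (ι' ((↑w⁻¹ : C)) * x' ^ (n - 1))
        (z_comm σ n w ι' x' hn hσn hx') _ _ (i : ℕ) _, ← pow_add]
    rcases lt_or_ge ((j : ℕ) + (i : ℕ)) n with hlt | hge
    · rw [hm, theta_mono σ n w ι x rep ι' x' hrep Θ hΘ ((j : ℕ) + (i : ℕ)) hlt _,
        Nat.add_comm (i : ℕ) (j : ℕ)]
      congr 1
      rw [it_mul σ.symm]
      have h5 : (⇑σ.symm)^[(j : ℕ) + (i : ℕ)] ((⇑σ)^[(j : ℕ)] b)
          = (⇑σ.symm)^[(i : ℕ)] b := by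
        rw [Nat.add_comm, Function.iterate_add_apply, it_cancel' σ]
      rw [h5, ← Function.iterate_add_apply (⇑σ.symm) (i : ℕ) (j : ℕ) a,
        Nat.add_comm (i : ℕ) (j : ℕ), mul_comm]
    · have hk : (j : ℕ) + (i : ℕ) - n < n := by omega
      have hred : ι (a * (⇑σ)^[(j : ℕ)] b) * x ^ ((j : ℕ) + (i : ℕ))
          = ι ((a * (⇑σ)^[(j : ℕ)] b) * ↑v) * x ^ ((j : ℕ) + (i : ℕ) - n) := by
        rw [show x ^ ((j : ℕ) + (i : ℕ)) = x ^ ((j : ℕ) + (i : ℕ) - n) * x ^ n from by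
            rw [← pow_add]; congr 1; omega,
          hxn, ← mul_assoc, mul_assoc (ι (a * (⇑σ)^[(j : ℕ)] b)),
          show x ^ ((j : ℕ) + (i : ℕ) - n) * ι ((v : Cˣ) : C)
            = ι ((v : Cˣ) : C) * x ^ ((j : ℕ) + (i : ℕ) - n) from by
            rw [powc σ ι x hx, it_fixed σ hvσ],
          ← mul_assoc, ← _root_.map_mul]
      rw [hm, hred, theta_mono σ n w ι x rep ι' x' hrep Θ hΘ _ hk _]
      have hzsplit : (ι' ((↑w⁻¹ : C)) * x' ^ (n - 1)) ^ ((i : ℕ) + (j : ℕ))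
          = (ι' ((↑w⁻¹ : C)) * x' ^ (n - 1)) ^ ((j : ℕ) + (i : ℕ) - n)
            * (ι' ((↑w⁻¹ : C)) * x' ^ (n - 1)) ^ n := by
        rw [← pow_add]; congr 1; omega
      have hzn : (ι' ((↑w⁻¹ : C)) * x' ^ (n - 1)) ^ n = ι' ((v : Cˣ) : C) := by
        rw [zpow_eq σ n w ι' x' hn hσn hwσ hx' hxn' n le_rfl, Nat.sub_self, pow_zero,
          mul_one, hwv]
      rw [hzsplit, hzn, zpow_comm σ n w ι' x' hn hσn hx' ((j : ℕ) + (i : ℕ) - n) _,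
        it_fixed σ.symm hvsymm, ← mul_assoc, ← _root_.map_mul]
      congr 2
      rw [it_mul σ.symm, it_fixed σ.symm hvsymm,
        ← Function.iterate_add_apply (⇑σ.symm) (i : ℕ) (j : ℕ) a]
      have h6 : ∀ c : C, (⇑σ.symm)^[(j : ℕ) + (i : ℕ) - n] c
          = (⇑σ.symm)^[(j : ℕ) + (i : ℕ)] c := by
        intro c
        conv_rhs => rw [show (j : ℕ) + (i : ℕ) = n + ((j : ℕ) + (i : ℕ) - n) from by omega,
          Function.iterate_add_apply]
        rw [it_symm_n σ n hσn]
      rw [h6, it_mul σ.symm]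
      have h5 : (⇑σ.symm)^[(j : ℕ) + (i : ℕ)] ((⇑σ)^[(j : ℕ)] b)
          = (⇑σ.symm)^[(i : ℕ)] b := by
        rw [Nat.add_comm, Function.iterate_add_apply, it_cancel' σ]
      rw [h5, Nat.add_comm (i : ℕ) (j : ℕ)]
      ring
  obtain ⟨cr, rfl⟩ : ∃ c, r = rep c := ⟨rep.symm r, (rep.apply_symm_apply r).symm⟩
  obtain ⟨cs, rfl⟩ : ∃ c, s = rep c := ⟨rep.symm s, (rep.apply_symm_apply s).symm⟩
  rw [hrep cr, hrep cs, Finset.sum_mul_sum]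
  simp only [theta_sum σ n w rep ι' x' Θ hΘ]
  rw [Finset.sum_mul_sum]
  refine Eq.trans (Finset.sum_congr rfl fun j _ =>
    (Finset.sum_congr rfl fun i _ => key j i _ _)) ?_
  exact Finset.sum_comm

lemma theta_inv (hn : 0 < n) (hσn : ∀ a : C, (⇑σ)^[n] a = a)
    (hvσ : σ (v : C) = v) (hw : w = v⁻¹)
    (hx : ∀ a : C, x * ι a = ι (σ a) * x) (hxn : x ^ n = ι (v : C))
    (hrep : ∀ c : Fin n → C, rep c = ∑ i : Fin n, ι (c i) * x ^ (i : ℕ))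
    (hx' : ∀ a : C, x' * ι' a = ι' (σ a) * x') (hxn' : x' ^ n = ι' ((w : Cˣ) : C))
    (hrep' : ∀ c : Fin n → C, rep' c = ∑ i : Fin n, ι' (c i) * x' ^ (i : ℕ))
    (Θ : A → A')
    (hΘ : ∀ r : A, Θ r = ∑ i : Fin n,
      ι' ((⇑σ.symm)^[(i : ℕ)] (rep.symm r i)) * (ι' ((↑w⁻¹ : C)) * x' ^ (n - 1)) ^ (i : ℕ))
    (Θ' : A' → A)
    (hΘ' : ∀ s : A', Θ' s = ∑ i : Fin n,
      ι ((⇑σ.symm)^[(i : ℕ)] (rep'.symm s i)) * (ι ((↑v⁻¹ : C)) * x ^ (n - 1)) ^ (i : ℕ))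
    (r : A) : Θ' (Θ r) = r := by
  have hwv : ((↑w⁻¹ : Cˣ) : C) = ↑v := by rw [hw, inv_inv]
  have hwσ : σ ((w : Cˣ) : C) = ↑w := by rw [hw]; exact unit_inv_fix σ v hvσ
  have hwisymm : σ.symm ((↑w⁻¹ : Cˣ) : C) = ↑w⁻¹ := symm_fix σ (unit_inv_fix σ w hwσ)
  have hmono : ∀ (k : ℕ) (hk : k < n) (a : C), Θ' (Θ (ι a * x ^ k)) = ι a * x ^ k := by
    intro k hk a
    rw [theta_mono σ n w ι x rep ι' x' hrep Θ hΘ k hk a]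
    rcases Nat.eq_zero_or_pos k with rfl | hkpos
    · rw [pow_zero, mul_one, show ι' ((⇑σ.symm)^[0] a) = ι' ((⇑σ.symm)^[0] a) * x' ^ 0 from
        by rw [pow_zero, mul_one],
        theta_mono σ n v ι' x' rep' ι x hrep' Θ' hΘ' 0 hn _]
      simp
    · rw [zpow_eq σ n w ι' x' hn hσn hwσ hx' hxn' k (le_of_lt hk), ← mul_assoc,
        ← _root_.map_mul, theta_mono σ n v ι' x' rep' ι x hrep' Θ' hΘ' (n - k) (by omega) _,
        zpow_eq σ n v ι x hn hσn hvσ hx hxn (n - k) (by omega),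
        show n - (n - k) = k from by omega]
      rw [it_mul σ.symm, ← Function.iterate_add_apply (⇑σ.symm) (n - k) k a,
        show n - k + k = n from by omega, it_symm_n σ n hσn a,
        it_fixed σ.symm hwisymm, hwv, ← mul_assoc, ← _root_.map_mul,
        show a * ((v : Cˣ) : C) * ((↑v⁻¹ : Cˣ) : C) = a from by
          rw [mul_assoc, Units.mul_inv, mul_one]]
  conv_rhs => rw [expand n ι x rep hrep r]
  conv_lhs => rw [expand n ι x rep hrep r]
  rw [theta_sum σ n w rep ι' x' Θ hΘ, theta_sum σ n v rep' ι x Θ' hΘ']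
  exact Finset.sum_congr rfl fun i _ => hmono (i : ℕ) i.isLt _

end Theta

section SPart
variable {A' : Type*} [Ring A']
variable (σ : C ≃+* C) (n : ℕ) (u : Cˣ)
variable (ιS : C →+* A) (xS : A) (repS : (ℕ →₀ C) ≃+ A)
variable (ι : C →+* A') (x : A') (rep : (Fin n → C) ≃+ A')
variable (π : A →+* A')

lemma repS_single (hrepS : ∀ p : ℕ →₀ C, repS p = ∑ k ∈ p.support, ιS (p k) * xS ^ k)
    (k : ℕ) (a : C) : repS (Finsupp.single k a) = ιS a * xS ^ k := by
  by_cases ha : a = 0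
  · subst ha; rw [Finsupp.single_zero, map_zero, map_zero, zero_mul]
  · rw [hrepS, Finsupp.support_single_ne_zero k ha, Finset.sum_singleton,
      Finsupp.single_eq_same]

lemma coeffS_mono (hrepS : ∀ p : ℕ →₀ C, repS p = ∑ k ∈ p.support, ιS (p k) * xS ^ k)
    (k : ℕ) (a : C) : repS.symm (ιS a * xS ^ k) = Finsupp.single k a := by
  rw [← repS_single ιS xS repS hrepS k a, AddEquiv.symm_apply_apply]

lemma pi_repS_small
    (hrepS : ∀ p : ℕ →₀ C, repS p = ∑ k ∈ p.support, ιS (p k) * xS ^ k)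
    (hrep : ∀ c : Fin n → C, rep c = ∑ i : Fin n, ι (c i) * x ^ (i : ℕ))
    (hπι : ∀ a : C, π (ιS a) = ι a) (hπx : π xS = x)
    (p : ℕ →₀ C) (hp : ∀ k, n ≤ k → p k = 0) :
    π (repS p) = rep (fun i : Fin n => p (i : ℕ)) := by
  rw [hrepS, map_sum]
  rw [Finset.sum_congr rfl fun k (_ : k ∈ p.support) =>
    show π (ιS (p k) * xS ^ k) = ι (p k) * x ^ k from by rw [_root_.map_mul, map_pow, hπι, hπx]]
  rw [hrep, Fin.sum_univ_eq_sum_range (fun k => ι (p k) * x ^ k) n]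
  refine Finset.sum_subset (fun k hk => ?_) (fun k _ hk => ?_)
  · rw [Finset.mem_range]
    by_contra hge
    exact (Finsupp.mem_support_iff.mp hk) (hp k (by omega))
  · rw [Finsupp.notMem_support_iff.mp hk, map_zero, zero_mul]

lemma ker_lemma (hn : 0 < n) (hσn : ∀ a : C, (⇑σ)^[n] a = a)
    (hxS : ∀ a : C, xS * ιS a = ιS (σ a) * xS)
    (hrepS : ∀ p : ℕ →₀ C, repS p = ∑ k ∈ p.support, ιS (p k) * xS ^ k)
    (hxn : x ^ n = ι ((u : Cˣ) : C))
    (hrep : ∀ c : Fin n → C, rep c = ∑ i : Fin n, ι (c i) * x ^ (i : ℕ))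
    (hπι : ∀ a : C, π (ιS a) = ι a) (hπx : π xS = x)
    (p : ℕ →₀ C) (h0 : π (repS p) = 0) :
    ∃ q : A, repS p = (xS ^ n - ιS ((u : Cˣ) : C)) * q := by
  have main : ∀ M : ℕ, ∀ p : ℕ →₀ C, (∀ k, n + M ≤ k → p k = 0) → π (repS p) = 0 →
      ∃ q : A, repS p = (xS ^ n - ιS ((u : Cˣ) : C)) * q := by
    intro M
    induction M with
    | zero =>
      intro p hp h0
      have h1 : π (repS p) = rep (fun i : Fin n => p (i : ℕ)) :=
        pi_repS_small n ιS xS repS ι x rep π hrepS hrep hπι hπx p (fun k hk => hp k (by omega))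
      have hc : (fun i : Fin n => p (i : ℕ)) = 0 := by
        apply rep.injective
        rw [map_zero, ← h1, h0]
      have hp0 : p = 0 := by
        ext k
        rcases lt_or_ge k n with hk | hk
        · exact congrFun hc ⟨k, hk⟩
        · exact hp k (by omega)
      exact ⟨0, by rw [hp0, map_zero, mul_zero]⟩
    | succ M ih =>
      intro p hp h0
      set a := p (n + M) with ha
      set p' : ℕ →₀ C := p - Finsupp.single (n + M) a
          + Finsupp.single M (((u : Cˣ) : C) * a) with hp'
      have hmul : (xS ^ n - ιS ((u : Cˣ) : C)) * (ιS a * xS ^ M)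
          = repS (Finsupp.single (n + M) a) - repS (Finsupp.single M (((u : Cˣ) : C) * a)) := by
        rw [repS_single ιS xS repS hrepS, repS_single ιS xS repS hrepS, sub_mul]
        congr 1
        · rw [← mul_assoc, powc σ ιS xS hxS n a, hσn a, mul_assoc, ← pow_add]
        · rw [← mul_assoc, ← _root_.map_mul]
      have hkey : repS p = repS p' + (xS ^ n - ιS ((u : Cˣ) : C)) * (ιS a * xS ^ M) := by
        rw [hmul, hp', map_add, map_sub]
        abel
      have hp'bound : ∀ k, n + M ≤ k → p' k = 0 := by
        intro k hk
        rw [hp']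
        rw [Finsupp.add_apply, Finsupp.sub_apply, Finsupp.single_apply, Finsupp.single_apply]
        rcases eq_or_lt_of_le hk with hkK | hkK
        · rw [if_pos hkK, if_neg (by omega), ← hkK, ← ha]
          simp
        · rw [if_neg (by omega), if_neg (by omega), hp k (by omega)]
          simp
      have h0' : π (repS p') = 0 := by
        have h2 := congrArg π hkey
        rw [map_add, _root_.map_mul, map_sub, map_pow, hπx, hπι, hxn, sub_self, zero_mul,
          add_zero] at h2
        rw [← h2]; exact h0
      obtain ⟨q, hq⟩ := ih p' hp'bound h0'
      exact ⟨q + ιS a * xS ^ M, by rw [mul_add, ← hq, ← hkey]⟩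
  exact main (p.support.sup id + 1) p (fun k hk => by
    by_contra hne
    have hmem : k ∈ p.support := Finsupp.mem_support_iff.mpr hne
    have := Finset.le_sup (f := id) hmem
    simp only [id] at this
    omega) h0

lemma monic_cancel [Nontrivial C] (hσn : ∀ a : C, (⇑σ)^[n] a = a)
    (hxS : ∀ a : C, xS * ιS a = ιS (σ a) * xS)
    (hrepS : ∀ p : ℕ →₀ C, repS p = ∑ k ∈ p.support, ιS (p k) * xS ^ k)
    (f : A) (hmonic : ∃ d : ℕ, repS.symm f d = 1 ∧ ∀ k, d < k → repS.symm f k = 0)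
    (s : A) (hfs : f * s = 0) : s = 0 := by
  by_contra hs0
  obtain ⟨d, hd1, hd2⟩ := hmonic
  set F := repS.symm f with hF
  set p := repS.symm s with hp
  have hpne : p.support.Nonempty := by
    rw [Finsupp.support_nonempty_iff]
    intro hp0
    apply hs0
    have hs : s = repS p := (repS.apply_symm_apply s).symm
    rw [hs, hp0, map_zero]
  set e := p.support.max' hpne with he
  have hfs2 : f * s = ∑ a ∈ F.support, ∑ b ∈ p.support,
      ιS (F a * (⇑σ)^[a] (p b)) * xS ^ (a + b) := by
    conv_lhs => rw [show f = repS F from (repS.apply_symm_apply f).symm,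
      show s = repS p from (repS.apply_symm_apply s).symm]
    rw [hrepS F, hrepS p, Finset.sum_mul_sum]
    refine Finset.sum_congr rfl fun a _ => Finset.sum_congr rfl fun b _ => ?_
    rw [mono_mul σ ιS xS hxS, ← pow_add]
  have hco : repS.symm (f * s) (d + e) = (⇑σ)^[d] (p e) := by
    rw [hfs2]
    simp only [map_sum, coeffS_mono ιS xS repS hrepS, Finsupp.finset_sum_apply,
      Finsupp.single_apply]
    rw [Finset.sum_eq_single d]
    · rw [Finset.sum_eq_single e]
      · rw [if_pos rfl, hd1, one_mul]
      · intro b hb hbe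
        rw [if_neg]
        have : b ≤ e := Finset.le_max' _ b hb
        omega
      · intro hee; exact absurd (p.support.max'_mem hpne) hee
    · intro a ha had
      apply Finset.sum_eq_zero
      intro b hb
      rw [if_neg]
      have hb' : b ≤ e := Finset.le_max' _ b hb
      have ha' : a ≤ d := by
        by_contra hgt
        exact (Finsupp.mem_support_iff.mp ha) (hd2 a (by omega))
      omega
    · intro hdd
      refine absurd (Finsupp.mem_support_iff.mpr ?_) hdd
      rw [hd1]; exact one_ne_zero
  rw [hfs, map_zero, Finsupp.coe_zero, Pi.zero_apply] at hco
  have hpe : p e = 0 := by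
    have h7 := congrArg ((⇑σ.symm)^[d]) hco
    rw [it_zero σ.symm, it_cancel' σ] at h7
    exact h7.symm
  exact (Finsupp.mem_support_iff.mp (p.support.max'_mem hpne)) hpe

lemma ann_lemma [Nontrivial C] (hn : 0 < n) (hσn : ∀ a : C, (⇑σ)^[n] a = a)
    (hxS : ∀ a : C, xS * ιS a = ιS (σ a) * xS)
    (hrepS : ∀ p : ℕ →₀ C, repS p = ∑ k ∈ p.support, ιS (p k) * xS ^ k)
    (hxn : x ^ n = ι ((u : Cˣ) : C))
    (hrep : ∀ c : Fin n → C, rep c = ∑ i : Fin n, ι (c i) * x ^ (i : ℕ))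
    (hπι : ∀ a : C, π (ιS a) = ι a) (hπx : π xS = x)
    (f h : A) (hmonic : ∃ d : ℕ, repS.symm f d = 1 ∧ ∀ k, d < k → repS.symm f k = 0)
    (hfh : xS ^ n - ιS ((u : Cˣ) : C) = f * h)
    (t : A') (ht : π f * t = 0) : ∃ r : A', t = π h * r := by
  set t2 : A := ∑ i : Fin n, ιS (rep.symm t i) * xS ^ (i : ℕ) with ht2
  have hπt2 : π t2 = t := by
    rw [ht2, map_sum]
    rw [Finset.sum_congr rfl fun (i : Fin n) (_ : i ∈ Finset.univ) =>
      show π (ιS (rep.symm t i) * xS ^ (i : ℕ)) = ι (rep.symm t i) * x ^ (i : ℕ) from by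
        rw [_root_.map_mul, map_pow, hπι, hπx]]
    rw [← hrep (rep.symm t)]
    exact rep.apply_symm_apply t
  have h1 : π (repS (repS.symm (f * t2))) = 0 := by
    rw [repS.apply_symm_apply, _root_.map_mul, hπt2, ht]
  obtain ⟨q, hq⟩ := ker_lemma σ n u ιS xS repS ι x rep π hn hσn hxS hrepS hxn hrep hπι hπx
    (repS.symm (f * t2)) h1
  rw [repS.apply_symm_apply, hfh, mul_assoc] at hq
  have h2 : t2 = h * q := by
    have h3 : f * (t2 - h * q) = 0 := by rw [mul_sub, ← hq, sub_self]
    have h4 := monic_cancel σ n ιS xS repS hσn hxS hrepS f hmonic _ h3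
    exact sub_eq_zero.mp h4
  exact ⟨π q, by rw [← hπt2, h2, _root_.map_mul]⟩

end SPart

end Stmt14Aux

open Stmt14Aux in
/-- Let `C` be commutative, `σ` an automorphism with `σ^n = id`, `u` a
unit fixed by `σ`, and suppose `x^n − u = f·h` in `S = C[x;σ]` with `f` monic. Let
`ℛ = C[x;σ]/⟨x^n − u⟩` and `ℛ̂ = C[x;σ]/⟨x^n − u⁻¹⟩` (presented abstractly, with
projection `π : S → ℛ`), coordinate maps `𝔳, 𝔳̂` given by the basis `1,…,x^{n-1}`, and
`Θ : ℛ → ℛ̂` the anti-isomorphism. If `𝒞 = 𝔳(ℛ·π(f))` is the `(u,σ)`-constacyclic code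
generated by `f`, then `𝒞^⊥ = 𝔳̂(ℛ̂·Θ(π h))`; in particular `𝒞^⊥` is
`(u⁻¹,σ)`-constacyclic. -/
theorem stmt14 {C S R Rh : Type*} [CommRing C] [Ring S] [Ring R] [Ring Rh]
    (σ : C ≃+* C) (n : ℕ) (hn : 0 < n) (hσn : ∀ a : C, (⇑σ)^[n] a = a)
    (u : Cˣ) (huσ : σ (u : C) = u)
    (ιS : C →+* S) (xS : S) (hxS : ∀ a : C, xS * ιS a = ιS (σ a) * xS)
    (repS : (ℕ →₀ C) ≃+ S)
    (hrepS : ∀ p : ℕ →₀ C, repS p = ∑ k ∈ p.support, ιS (p k) * xS ^ k)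
    (ι : C →+* R) (x : R) (hx : ∀ a : C, x * ι a = ι (σ a) * x)
    (hxn : x ^ n = ι u)
    (rep : (Fin n → C) ≃+ R)
    (hrep : ∀ c : Fin n → C, rep c = ∑ i : Fin n, ι (c i) * x ^ (i : ℕ))
    (π : S →+* R) (hπι : ∀ a : C, π (ιS a) = ι a) (hπx : π xS = x)
    (ι' : C →+* Rh) (x' : Rh) (hx' : ∀ a : C, x' * ι' a = ι' (σ a) * x')
    (hxn' : x' ^ n = ι' ((u⁻¹ : Cˣ) : C))
    (rep' : (Fin n → C) ≃+ Rh)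
    (hrep' : ∀ c : Fin n → C, rep' c = ∑ i : Fin n, ι' (c i) * x' ^ (i : ℕ))
    (Θ : R → Rh)
    (hΘ : ∀ r : R, Θ r = ∑ i : Fin n,
      ι' ((⇑σ.symm)^[(i : ℕ)] (rep.symm r i)) * (ι' (u : C) * x' ^ (n - 1)) ^ (i : ℕ))
    (f h : S)
    (hmonic : ∃ d : ℕ, repS.symm f d = 1 ∧ ∀ k, d < k → repS.symm f k = 0)
    (hfh : xS ^ n - ιS u = f * h) :
    {w : Fin n → C | ∀ g : R, dotProduct w (rep.symm (g * π f)) = 0}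
      = Set.range fun g : Rh => rep'.symm (g * Θ (π h)) := by
  classical
  by_cases htriv : Subsingleton C
  · have hsub : Subsingleton (Fin n → C) :=
      ⟨fun f g => funext fun i => Subsingleton.elim (f i) (g i)⟩
    ext w
    simp only [Set.mem_setOf_eq, Set.mem_range]
    constructor
    · intro _; exact ⟨0, Subsingleton.elim _ _⟩
    · intro _ g; exact Subsingleton.elim _ _
  have hnt : Nontrivial C := not_subsingleton_iff_nontrivial.mp htriv
  have huiσ : σ ((↑u⁻¹ : Cˣ) : C) = ↑u⁻¹ := unit_inv_fix σ u huσ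
  have hΘw : ∀ r : R, Θ r = ∑ i : Fin n,
      ι' ((⇑σ.symm)^[(i : ℕ)] (rep.symm r i))
        * (ι' ((↑(u⁻¹ : Cˣ)⁻¹ : Cˣ) : C) * x' ^ (n - 1)) ^ (i : ℕ) := by
    intro r; rw [inv_inv]; exact hΘ r
  set Θh : Rh → R := fun s => ∑ i : Fin n,
    ι ((⇑σ.symm)^[(i : ℕ)] (rep'.symm s i)) * (ι ((↑u⁻¹ : Cˣ) : C) * x ^ (n - 1)) ^ (i : ℕ)
    with hΘhdef
  have hΘhw : ∀ s : Rh, Θh s = ∑ i : Fin n,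
      ι ((⇑σ.symm)^[(i : ℕ)] (rep'.symm s i)) * (ι ((↑u⁻¹ : Cˣ) : C) * x ^ (n - 1)) ^ (i : ℕ) :=
    fun s => rfl
  have hinv1 : ∀ r : R, Θh (Θ r) = r := fun r =>
    theta_inv σ n u u⁻¹ ι x rep ι' x' rep' hn hσn huσ rfl hx hxn hrep hx' hxn' hrep'
      Θ hΘw Θh hΘhw r
  have hinv2 : ∀ s : Rh, Θ (Θh s) = s := fun s =>
    theta_inv σ n u⁻¹ u ι' x' rep' ι x rep hn hσn huiσ (inv_inv u).symm hx' hxn' hrep'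
      hx hxn hrep Θh hΘhw Θ hΘw s
  have hanti : ∀ a b : Rh, Θh (a * b) = Θh b * Θh a := fun a b =>
    theta_antimul σ n u⁻¹ u ι' x' rep' ι x hn hσn huiσ (inv_inv u).symm hx' hxn' hrep'
      hx hxn Θh hΘhw a b
  have hfh0 : π f * π h = 0 := by
    rw [← _root_.map_mul, ← hfh, map_sub, map_pow, hπx, hπι, hxn, sub_self]
  ext w
  simp only [Set.mem_setOf_eq, Set.mem_range]
  rw [mem_iff σ n u ι x rep hn hσn huσ hx hxn hrep w (π f)]
  constructor
  · intro h0
    obtain ⟨r, hr⟩ := ann_lemma σ n u ιS xS repS ι x rep π hn hσn hxS hrepS hxn hrep hπι hπx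
      f h hmonic hfh _ h0
    have hTΘ : Θh (rep' w) = ∑ i : Fin n,
        ι ((⇑σ.symm)^[(i : ℕ)] (w i)) * (ι ((↑u⁻¹ : Cˣ) : C) * x ^ (n - 1)) ^ (i : ℕ) := by
      rw [hΘhw]
      simp only [AddEquiv.symm_apply_apply]
    have h5 : Θ (Θh (rep' w)) = rep' w := hinv2 (rep' w)
    rw [hTΘ, hr, theta_antimul σ n u u⁻¹ ι x rep ι' x' hn hσn huσ rfl hx hxn hrep hx' hxn'
      Θ hΘw] at h5
    exact ⟨Θ r, by rw [h5, AddEquiv.symm_apply_apply]⟩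
  · rintro ⟨g, rfl⟩
    rw [← hΘhw (g * Θ (π h)), hanti, hinv1 (π h), ← mul_assoc, hfh0, zero_mul]
end
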